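/- arXiv:1109.1945 — 8 statements merged into one kernel-verified Lean document; each statement's English description precedes it below -/
import Mathlib

section
/- Let S be a finite totally ordered set, R a commutative ring with 1, q ∈ R, and A = R⟨t_s : s ∈ S⟩ the free associative algebra. For J ⊆ S define τ⁻_J = Σ_{I⊆J, #I odd} (-1)^{ℓ_J(I)} (-q)^{(#I-1)/2} t_{J∖I} and τ⁺_J = Σ_{I⊆J, #I even} (-1)^{ℓ_J(I)} (-q)^{#I/2} t_{J∖I}, where t_K denotes the ordered monomial over K and ℓ_J(I) = Σ_ν (α_ν − ν) for I = {j_{α_1} < ⋯ < j_{α_{#I}}}. Then for J = J' ∪ J'' with every element of J' less than every element of J'', the identity τ⁺_J = τ⁺_{J'} τ⁺_{J''} + (−1)^{#J'} q τ⁻_{J'} τ⁻_{J''} holds in A. -/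
/-- The ordered monomial `t_J = t_{j_1} ⋯ t_{j_{#J}}` in the free algebra. -/
noncomputable def tMon (R : Type*) [CommRing R] {S : Type*} [LinearOrder S] (J : Finset S) :
    FreeAlgebra R S :=
  ((J.sort (· ≤ ·)).map (FreeAlgebra.ι R)).prod

/-- `ℓ_J(I) = Σ_ν (α_ν - ν) = Σ_{i ∈ I} #{j ∈ J \ I : j < i}`. -/
def ellJ {S : Type*} [LinearOrder S] (J I : Finset S) : ℕ :=
  ∑ i ∈ I, ((J \ I).filter (· < i)).card

/-- `τ⁻_J = Σ_{I ⊆ J, #I odd} (-1)^{ℓ_J(I)} (-q)^{(#I-1)/2} t_{J∖I}`. -/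
noncomputable def tauMinus (R : Type*) [CommRing R] {S : Type*} [LinearOrder S] (q : R)
    (J : Finset S) : FreeAlgebra R S :=
  ∑ I ∈ J.powerset.filter fun I => ¬ 2 ∣ I.card,
    ((-1 : R) ^ ellJ J I * (-q) ^ ((I.card - 1) / 2)) • tMon R (J \ I)

/-- `τ⁺_J = Σ_{I ⊆ J, #I even} (-1)^{ℓ_J(I)} (-q)^{#I/2} t_{J∖I}`. -/
noncomputable def tauPlus (R : Type*) [CommRing R] {S : Type*} [LinearOrder S] (q : R)
    (J : Finset S) : FreeAlgebra R S :=
  ∑ I ∈ J.powerset.filter fun I => 2 ∣ I.card,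
    ((-1 : R) ^ ellJ J I * (-q) ^ (I.card / 2)) • tMon R (J \ I)

/-! ### Auxiliary lemmas -/

theorem myDisjOfLt {S : Type*} [LinearOrder S] {A B : Finset S}
    (h : ∀ a ∈ A, ∀ b ∈ B, a < b) : Disjoint A B := by
  rw [Finset.disjoint_left]
  intro a ha hb
  exact lt_irrefl a (h a ha a hb)

theorem mySortUnion {S : Type*} [LinearOrder S] (A B : Finset S)
    (h : ∀ a ∈ A, ∀ b ∈ B, a < b) :
    (A ∪ B).sort (· ≤ ·) = A.sort (· ≤ ·) ++ B.sort (· ≤ ·) := by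
  have hd : Disjoint A B := myDisjOfLt h
  refine (fun hp h1 h2 => List.Perm.eq_of_pairwise' (r := (· ≤ ·)) h1 h2 hp) ?_ ?_ ?_
  · rw [← Multiset.coe_eq_coe, ← Multiset.coe_add, Finset.sort_eq, Finset.sort_eq,
      Finset.sort_eq, ← Finset.disjUnion_eq_union _ _ hd]
    rfl
  · exact Finset.pairwise_sort _ _
  · rw [List.pairwise_append]
    refine ⟨Finset.pairwise_sort _ _, Finset.pairwise_sort _ _, ?_⟩
    intro a ha b hb
    exact (h a (by simpa using ha) b (by simpa using hb)).le

theorem myTMonUnion (R : Type*) [CommRing R] {S : Type*} [LinearOrder S] (A B : Finset S)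
    (h : ∀ a ∈ A, ∀ b ∈ B, a < b) : tMon R (A ∪ B) = tMon R A * tMon R B := by
  rw [tMon, mySortUnion A B h, List.map_append, List.prod_append]; rfl

theorem mySdiffUnionSdiff {S : Type*} [LinearOrder S] {J' J'' I' I'' : Finset S}
    (hd : Disjoint J' J'') (h1 : I' ⊆ J') (h2 : I'' ⊆ J'') :
    (J' ∪ J'') \ (I' ∪ I'') = (J' \ I') ∪ (J'' \ I'') := by
  rw [Finset.disjoint_left] at hd
  ext a
  simp only [Finset.mem_sdiff, Finset.mem_union]
  constructor
  · rintro ⟨h | h, hn⟩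
    · exact Or.inl ⟨h, fun c => hn (Or.inl c)⟩
    · exact Or.inr ⟨h, fun c => hn (Or.inr c)⟩
  · rintro (⟨h, hn⟩ | ⟨h, hn⟩)
    · exact ⟨Or.inl h, by rintro (c | c); exact hn c; exact hd h (h2 c)⟩
    · exact ⟨Or.inr h, by rintro (c | c); exact hd (h1 c) h; exact hn c⟩

theorem myEllUnion {S : Type*} [LinearOrder S] {J' J'' I' I'' : Finset S}
    (hlt : ∀ j' ∈ J', ∀ j'' ∈ J'', j' < j'') (h1 : I' ⊆ J') (h2 : I'' ⊆ J'') :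
    ellJ (J' ∪ J'') (I' ∪ I'') = ellJ J' I' + ellJ J'' I'' + I''.card * (J'.card - I'.card) := by
  have hd : Disjoint J' J'' := myDisjOfLt hlt
  have hdI : Disjoint I' I'' := myDisjOfLt (fun a ha b hb => hlt a (h1 ha) b (h2 hb))
  have hdD : Disjoint (J' \ I') (J'' \ I'') :=
    hd.mono Finset.sdiff_subset Finset.sdiff_subset
  rw [ellJ, mySdiffUnionSdiff hd h1 h2, Finset.sum_union hdI]
  have e1 : ∀ i ∈ I', (((J' \ I') ∪ (J'' \ I'')).filter (· < i)).card
      = ((J' \ I').filter (· < i)).card := by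
    intro i hi
    congr 1
    rw [Finset.filter_union]
    have : (J'' \ I'').filter (· < i) = ∅ := by
      rw [Finset.filter_eq_empty_iff]
      intro b hb
      exact not_lt_of_gt (hlt i (h1 hi) b (Finset.mem_sdiff.1 hb).1)
    rw [this, Finset.union_empty]
  have e2 : ∀ i ∈ I'', (((J' \ I') ∪ (J'' \ I'')).filter (· < i)).card
      = (J'.card - I'.card) + ((J'' \ I'').filter (· < i)).card := by
    intro i hi
    rw [Finset.filter_union, Finset.card_union_of_disjoint
      (hdD.mono (Finset.filter_subset _ _) (Finset.filter_subset _ _))]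
    congr 1
    rw [Finset.filter_true_of_mem, Finset.card_sdiff_of_subset h1]
    intro b hb
    exact hlt b (Finset.mem_sdiff.1 hb).1 i (h2 hi)
  rw [Finset.sum_congr rfl e1, Finset.sum_congr rfl e2, Finset.sum_add_distrib,
    Finset.sum_const, ellJ, ellJ, smul_eq_mul]
  ring

theorem mySumPowersetUnion {S : Type*} [DecidableEq S] {M : Type*} [AddCommMonoid M]
    {A B : Finset S} (hd : Disjoint A B) (f : Finset S → M) :
    ∑ I ∈ (A ∪ B).powerset, f I = ∑ I' ∈ A.powerset, ∑ I'' ∈ B.powerset, f (I' ∪ I'') := by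
  rw [Finset.disjoint_left] at hd
  rw [← Finset.sum_product']
  refine Finset.sum_nbij' (fun I => (I ∩ A, I ∩ B)) (fun p => p.1 ∪ p.2) ?_ ?_ ?_ ?_ ?_
  · intro I hI
    simp only [Finset.mem_product, Finset.mem_powerset]
    exact ⟨Finset.inter_subset_right, Finset.inter_subset_right⟩
  · intro p hp
    simp only [Finset.mem_product, Finset.mem_powerset] at hp ⊢
    exact Finset.union_subset_union hp.1 hp.2
  · intro I hI
    simp only [Finset.mem_powerset] at hI
    show I ∩ A ∪ I ∩ B = I
    rw [← Finset.inter_union_distrib_left, Finset.inter_eq_left.2 hI]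
  · intro p hp
    simp only [Finset.mem_product, Finset.mem_powerset] at hp
    have h1 : (p.1 ∪ p.2) ∩ A = p.1 := by
      ext a
      simp only [Finset.mem_inter, Finset.mem_union]
      constructor
      · rintro ⟨h | h, hA⟩
        · exact h
        · exact absurd (hp.2 h) (hd hA)
      · intro h
        exact ⟨Or.inl h, hp.1 h⟩
    have h2 : (p.1 ∪ p.2) ∩ B = p.2 := by
      ext a
      simp only [Finset.mem_inter, Finset.mem_union]
      constructor
      · rintro ⟨h | h, hB⟩
        · exact absurd hB (hd (hp.1 h))
        · exact h
      · intro h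
        exact ⟨Or.inr h, hp.2 h⟩
    simp [Prod.ext_iff, h1, h2]
  · intro I hI
    simp only
    rw [← Finset.inter_union_distrib_left,
      Finset.inter_eq_left.2 (Finset.mem_powerset.1 hI)]

theorem stmt0 {S : Type*} [Fintype S] [LinearOrder S] {R : Type*} [CommRing R] (q : R)
    (J J' J'' : Finset S) (hJ : J = J' ∪ J'')
    (hlt : ∀ j' ∈ J', ∀ j'' ∈ J'', j' < j'') :
    tauPlus R q J = tauPlus R q J' * tauPlus R q J''
      + ((-1 : R) ^ J'.card * q) • (tauMinus R q J' * tauMinus R q J'') := by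
  subst hJ
  have hd : Disjoint J' J'' := myDisjOfLt hlt
  have key : ∀ I' ∈ J'.powerset, ∀ I'' ∈ J''.powerset,
      (if 2 ∣ (I' ∪ I'').card then
        ((-1 : R) ^ ellJ (J' ∪ J'') (I' ∪ I'') * (-q) ^ ((I' ∪ I'').card / 2)) •
          tMon R ((J' ∪ J'') \ (I' ∪ I'')) else 0)
      = (if 2 ∣ I'.card then
            ((-1 : R) ^ ellJ J' I' * (-q) ^ (I'.card / 2)) • tMon R (J' \ I') else 0)
          * (if 2 ∣ I''.card then
            ((-1 : R) ^ ellJ J'' I'' * (-q) ^ (I''.card / 2)) • tMon R (J'' \ I'') else 0)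
        + ((-1 : R) ^ J'.card * q) •
          ((if ¬ 2 ∣ I'.card then
            ((-1 : R) ^ ellJ J' I' * (-q) ^ ((I'.card - 1) / 2)) • tMon R (J' \ I') else 0)
            * (if ¬ 2 ∣ I''.card then
            ((-1 : R) ^ ellJ J'' I'' * (-q) ^ ((I''.card - 1) / 2)) • tMon R (J'' \ I'')
              else 0)) := by
    intro I' hI' I'' hI''
    rw [Finset.mem_powerset] at hI' hI''
    have hdI : Disjoint I' I'' := myDisjOfLt fun a ha b hb => hlt a (hI' ha) b (hI'' hb)
    have hcard : (I' ∪ I'').card = I'.card + I''.card := Finset.card_union_of_disjoint hdI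
    have hell := myEllUnion hlt hI' hI''
    have hm : tMon R ((J' ∪ J'') \ (I' ∪ I'')) = tMon R (J' \ I') * tMon R (J'' \ I'') := by
      rw [mySdiffUnionSdiff hd hI' hI'']
      exact myTMonUnion R _ _ fun a ha b hb =>
        hlt a (Finset.mem_sdiff.1 ha).1 b (Finset.mem_sdiff.1 hb).1
    have hle : I'.card ≤ J'.card := Finset.card_le_card hI'
    rcases Nat.even_or_odd I'.card with ⟨x, hx⟩ | ⟨x, hx⟩ <;>
      rcases Nat.even_or_odd I''.card with ⟨y, hy⟩ | ⟨y, hy⟩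
    · -- even, even
      have d1 : 2 ∣ I'.card := ⟨x, by omega⟩
      have d2 : 2 ∣ I''.card := ⟨y, by omega⟩
      have d3 : 2 ∣ (I' ∪ I'').card := by rw [hcard]; exact ⟨x + y, by omega⟩
      rw [if_pos d3, if_pos d1, if_pos d2, if_neg (not_not_intro d1), zero_mul,
        smul_zero, add_zero, smul_mul_smul_comm, hm, hell, hcard, hx, hy]
      have e1 : (x + x + (y + y)) / 2 = x + y := by omega
      have e2 : (x + x) / 2 = x := by omega
      have e3 : (y + y) / 2 = y := by omega
      rw [e1, e2, e3]
      congr 1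
      have n1 : ((-1 : R)) ^ ((y + y) * (J'.card - (x + x))) = 1 := by
        have : (y + y) * (J'.card - (x + x)) = 2 * (y * (J'.card - (x + x))) := by ring
        rw [this, pow_mul]
        norm_num
      rw [pow_add, pow_add, n1, pow_add]
      ring
    · -- even, odd : both sides zero
      have d1 : 2 ∣ I'.card := ⟨x, by omega⟩
      have d2 : ¬ 2 ∣ I''.card := by omega
      have d3 : ¬ 2 ∣ (I' ∪ I'').card := by rw [hcard]; omega
      rw [if_neg d3, if_neg d2, mul_zero, if_neg (not_not_intro d1), zero_mul,
        smul_zero, add_zero]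
    · -- odd, even : both sides zero
      have d1 : ¬ 2 ∣ I'.card := by omega
      have d2 : 2 ∣ I''.card := ⟨y, by omega⟩
      have d3 : ¬ 2 ∣ (I' ∪ I'').card := by rw [hcard]; omega
      rw [if_neg d3, if_neg d1, zero_mul, if_neg (not_not_intro d2), mul_zero,
        smul_zero, add_zero]
    · -- odd, odd
      have d1 : ¬ 2 ∣ I'.card := by omega
      have d2 : ¬ 2 ∣ I''.card := by omega
      have d3 : 2 ∣ (I' ∪ I'').card := by rw [hcard]; exact ⟨x + y + 1, by omega⟩
      rw [if_pos d3, if_neg d1, zero_mul, zero_add, if_pos d1, if_pos d2,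
        smul_mul_smul_comm, smul_smul, hm, hell, hcard, hx, hy]
      have e1 : (2 * x + 1 + (2 * y + 1)) / 2 = x + y + 1 := by omega
      have e2 : (2 * x + 1 - 1) / 2 = x := by omega
      have e3 : (2 * y + 1 - 1) / 2 = y := by omega
      rw [e1, e2, e3]
      congr 1
      obtain ⟨d, hdJ⟩ : ∃ d, J'.card = d + (2 * x + 1) := ⟨J'.card - (2 * x + 1), by omega⟩
      rw [hdJ]
      have e4 : d + (2 * x + 1) - (2 * x + 1) = d := by omega
      rw [e4]
      have n1 : ((-1 : R)) ^ ((2 * y + 1) * d) = (-1) ^ d := by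
        have : (2 * y + 1) * d = 2 * (y * d) + d := by ring
        rw [this, pow_add, pow_mul]
        norm_num
      have n2 : ((-1 : R)) ^ (d + (2 * x + 1)) = -(-1) ^ d := by
        have : d + (2 * x + 1) = 2 * x + (d + 1) := by omega
        rw [this, pow_add, pow_mul, pow_add]
        norm_num
      rw [pow_add, pow_add, n1, n2, pow_add, pow_add, pow_one]
      ring
  have hP : tauPlus R q J' * tauPlus R q J''
      = ∑ I' ∈ J'.powerset, ∑ I'' ∈ J''.powerset,
        (if 2 ∣ I'.card then
            ((-1 : R) ^ ellJ J' I' * (-q) ^ (I'.card / 2)) • tMon R (J' \ I') else 0)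
          * (if 2 ∣ I''.card then
            ((-1 : R) ^ ellJ J'' I'' * (-q) ^ (I''.card / 2)) • tMon R (J'' \ I'') else 0) := by
    rw [tauPlus, tauPlus, Finset.sum_mul_sum, Finset.sum_filter]
    refine Finset.sum_congr rfl fun I' _ => ?_
    by_cases h : 2 ∣ I'.card
    · rw [if_pos h, Finset.sum_filter]
      refine Finset.sum_congr rfl fun I'' _ => ?_
      by_cases h2 : 2 ∣ I''.card <;> simp [h, h2]
    · rw [if_neg h]
      symm
      apply Finset.sum_eq_zero
      intro I'' _
      simp [h]
  have hM : ((-1 : R) ^ J'.card * q) • (tauMinus R q J' * tauMinus R q J'')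
      = ∑ I' ∈ J'.powerset, ∑ I'' ∈ J''.powerset,
        ((-1 : R) ^ J'.card * q) •
          ((if ¬ 2 ∣ I'.card then
            ((-1 : R) ^ ellJ J' I' * (-q) ^ ((I'.card - 1) / 2)) • tMon R (J' \ I') else 0)
            * (if ¬ 2 ∣ I''.card then
            ((-1 : R) ^ ellJ J'' I'' * (-q) ^ ((I''.card - 1) / 2)) • tMon R (J'' \ I'')
              else 0)) := by
    rw [tauMinus, tauMinus, Finset.sum_mul_sum, Finset.smul_sum, Finset.sum_filter]
    refine Finset.sum_congr rfl fun I' _ => ?_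
    by_cases h : ¬ 2 ∣ I'.card
    · rw [if_pos h, Finset.smul_sum, Finset.sum_filter]
      refine Finset.sum_congr rfl fun I'' _ => ?_
      by_cases h2 : ¬ 2 ∣ I''.card <;> simp [h, h2]
    · rw [if_neg h]
      symm
      apply Finset.sum_eq_zero
      intro I'' _
      simp [h]
  rw [tauPlus, Finset.sum_filter, mySumPowersetUnion hd, hP, hM, ← Finset.sum_add_distrib]
  refine Finset.sum_congr rfl fun I' hI' => ?_
  rw [← Finset.sum_add_distrib]
  exact Finset.sum_congr rfl fun I'' hI'' => key I' hI' I'' hI''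
end

section
/- With the same setup: for J = J' ∪ J'' with every element of J' less than every element of J'', the identity τ⁻_J = τ⁻_{J'} τ⁺_{J''} + (−1)^{#J'} τ⁺_{J'} τ⁻_{J''} holds in the free algebra A. -/
section Aux
variable {S : Type*} [LinearOrder S] {R : Type*} [CommRing R]

lemma tMon_union (A B : Finset S) (h : ∀ a ∈ A, ∀ b ∈ B, a < b) :
    tMon R (A ∪ B) = tMon R A * tMon R B := by
  have hd : Disjoint A B := by
    rw [Finset.disjoint_left]
    intro a ha hb
    exact absurd (h a ha a hb) (lt_irrefl a)
  have hval : (A ∪ B).val = A.val + B.val := by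
    rw [← Finset.disjUnion_eq_union A B hd]; rfl
  have hperm : ((A.sort (· ≤ ·) ++ B.sort (· ≤ ·) : List S) : Multiset S)
      = ((A ∪ B).sort (· ≤ ·) : Multiset S) := by
    rw [← Multiset.coe_add, Finset.sort_eq, Finset.sort_eq, Finset.sort_eq, hval]
  have hsorted : List.Pairwise (· ≤ ·) (A.sort (· ≤ ·) ++ B.sort (· ≤ ·)) := by
    rw [List.pairwise_append]
    refine ⟨Finset.pairwise_sort _ _, Finset.pairwise_sort _ _, ?_⟩
    intro a ha b hb
    exact (h a (Finset.mem_sort _ |>.mp ha) b (Finset.mem_sort _ |>.mp hb)).le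
  have hls : (A ∪ B).sort (· ≤ ·) = A.sort (· ≤ ·) ++ B.sort (· ≤ ·) :=
    List.Perm.eq_of_pairwise'
      (Finset.pairwise_sort _ _) hsorted (Multiset.coe_eq_coe.mp hperm).symm
  unfold tMon
  rw [hls, List.map_append, List.prod_append]

lemma ellJ_union (J' J'' I' I'' : Finset S) (hI' : I' ⊆ J') (hI'' : I'' ⊆ J'')
    (hlt : ∀ j' ∈ J', ∀ j'' ∈ J'', j' < j'') :
    ellJ (J' ∪ J'') (I' ∪ I'') =
      ellJ J' I' + ellJ J'' I'' + I''.card * (J'.card - I'.card) := by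
  have hdJ : Disjoint J' J'' := by
    rw [Finset.disjoint_left]
    intro a ha hb
    exact absurd (hlt a ha a hb) (lt_irrefl a)
  have hdI : Disjoint I' I'' := hdJ.mono hI' hI''
  have hsd : (J' ∪ J'') \ (I' ∪ I'') = (J' \ I') ∪ (J'' \ I'') := by
    have h1 : ∀ x ∈ J', x ∉ I'' := fun x hx hx' =>
      (Finset.disjoint_left.mp hdJ hx) (hI'' hx')
    have h2 : ∀ x ∈ J'', x ∉ I' := fun x hx hx' =>
      (Finset.disjoint_right.mp hdJ hx) (hI' hx')
    ext x
    simp only [Finset.mem_sdiff, Finset.mem_union, not_or]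
    constructor
    · rintro ⟨h | h, hn1, hn2⟩
      · exact Or.inl ⟨h, hn1⟩
      · exact Or.inr ⟨h, hn2⟩
    · rintro (⟨h, hn⟩ | ⟨h, hn⟩)
      · exact ⟨Or.inl h, hn, h1 x h⟩
      · exact ⟨Or.inr h, h2 x h, hn⟩
  unfold ellJ
  rw [Finset.sum_union hdI, hsd]
  have hA : ∀ i ∈ I', (((J' \ I') ∪ (J'' \ I'')).filter (· < i)).card
      = ((J' \ I').filter (· < i)).card := by
    intro i hi
    congr 1
    rw [Finset.filter_union]
    have he : (J'' \ I'').filter (· < i) = ∅ := by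
      rw [Finset.filter_eq_empty_iff]
      intro x hx
      exact not_lt.mpr (hlt i (hI' hi) x (Finset.mem_sdiff.mp hx).1).le
    rw [he, Finset.union_empty]
  have hB : ∀ i ∈ I'', (((J' \ I') ∪ (J'' \ I'')).filter (· < i)).card
      = ((J'' \ I'').filter (· < i)).card + (J'.card - I'.card) := by
    intro i hi
    rw [Finset.filter_union]
    have h1 : (J' \ I').filter (· < i) = J' \ I' := by
      rw [Finset.filter_eq_self]
      intro x hx
      exact hlt x (Finset.mem_sdiff.mp hx).1 i (hI'' hi)
    have hdisj : Disjoint ((J' \ I') : Finset S) ((J'' \ I'').filter (· < i)) :=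
      (hdJ.mono Finset.sdiff_subset Finset.sdiff_subset).mono_right
        (Finset.filter_subset _ _)
    rw [h1, Finset.card_union_of_disjoint hdisj, Finset.card_sdiff_of_subset hI']
    ring
  rw [Finset.sum_congr rfl hA, Finset.sum_congr rfl hB, Finset.sum_add_distrib,
    Finset.sum_const, smul_eq_mul]
  ring

lemma sum_powerset_union' {M : Type*} [AddCommMonoid M] (A B : Finset S) (hd : Disjoint A B)
    (f : Finset S → M) :
    ∑ I ∈ (A ∪ B).powerset, f I =
      ∑ I' ∈ A.powerset, ∑ I'' ∈ B.powerset, f (I' ∪ I'') := by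
  rw [← Finset.sum_product']
  refine Finset.sum_nbij' (fun I => (I ∩ A, I ∩ B)) (fun p => p.1 ∪ p.2) ?_ ?_ ?_ ?_ ?_
  · intro I hI
    simp only [Finset.mem_product, Finset.mem_powerset]
    exact ⟨Finset.inter_subset_right, Finset.inter_subset_right⟩
  · intro p hp
    simp only [Finset.mem_product, Finset.mem_powerset] at hp ⊢
    exact Finset.union_subset (hp.1.trans Finset.subset_union_left)
      (hp.2.trans Finset.subset_union_right)
  · intro I hI
    simp only [Finset.mem_powerset] at hI
    show I ∩ A ∪ I ∩ B = I
    rw [← Finset.inter_union_distrib_left, Finset.inter_eq_left.mpr hI]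
  · rintro ⟨p1, p2⟩ hp
    simp only [Finset.mem_product, Finset.mem_powerset] at hp
    have h1 : (p1 ∪ p2) ∩ A = p1 := by
      rw [Finset.union_inter_distrib_right, Finset.inter_eq_left.mpr hp.1,
        Finset.disjoint_iff_inter_eq_empty.mp (hd.symm.mono_left hp.2), Finset.union_empty]
    have h2 : (p1 ∪ p2) ∩ B = p2 := by
      rw [Finset.union_inter_distrib_right, Finset.inter_eq_left.mpr hp.2,
        Finset.disjoint_iff_inter_eq_empty.mp (hd.mono_left hp.1), Finset.empty_union]
    simp [h1, h2]
  · intro I hI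
    simp only [Finset.mem_powerset] at hI
    show f I = f (I ∩ A ∪ I ∩ B)
    rw [← Finset.inter_union_distrib_left, Finset.inter_eq_left.mpr hI]

end Aux

theorem stmt1 {S : Type*} [Fintype S] [LinearOrder S] {R : Type*} [CommRing R] (q : R)
    (J J' J'' : Finset S) (hJ : J = J' ∪ J'')
    (hlt : ∀ j' ∈ J', ∀ j'' ∈ J'', j' < j'') :
    tauMinus R q J = tauMinus R q J' * tauPlus R q J''
      + ((-1 : R) ^ J'.card) • (tauPlus R q J' * tauMinus R q J'') := by
  subst hJ
  have hdJ : Disjoint J' J'' := by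
    rw [Finset.disjoint_left]
    intro a ha hb
    exact absurd (hlt a ha a hb) (lt_irrefl a)
  unfold tauMinus tauPlus
  rw [Finset.sum_filter, Finset.sum_filter, Finset.sum_filter, Finset.sum_filter,
    Finset.sum_filter, sum_powerset_union' J' J'' hdJ, Finset.sum_mul_sum,
    Finset.sum_mul_sum, Finset.smul_sum, ← Finset.sum_add_distrib]
  refine Finset.sum_congr rfl fun I' hI'mem => ?_
  rw [Finset.smul_sum, ← Finset.sum_add_distrib]
  refine Finset.sum_congr rfl fun I'' hI''mem => ?_
  have hI' : I' ⊆ J' := Finset.mem_powerset.mp hI'mem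
  have hI'' : I'' ⊆ J'' := Finset.mem_powerset.mp hI''mem
  have hdI : Disjoint I' I'' := hdJ.mono hI' hI''
  have hc : (I' ∪ I'').card = I'.card + I''.card := Finset.card_union_of_disjoint hdI
  have hsd : (J' ∪ J'') \ (I' ∪ I'') = (J' \ I') ∪ (J'' \ I'') := by
    have h1 : ∀ x ∈ J', x ∉ I'' := fun x hx hx' =>
      (Finset.disjoint_left.mp hdJ hx) (hI'' hx')
    have h2 : ∀ x ∈ J'', x ∉ I' := fun x hx hx' =>
      (Finset.disjoint_right.mp hdJ hx) (hI' hx')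
    ext x
    simp only [Finset.mem_sdiff, Finset.mem_union, not_or]
    constructor
    · rintro ⟨h | h, hn1, hn2⟩
      · exact Or.inl ⟨h, hn1⟩
      · exact Or.inr ⟨h, hn2⟩
    · rintro (⟨h, hn⟩ | ⟨h, hn⟩)
      · exact ⟨Or.inl h, hn, h1 x h⟩
      · exact ⟨Or.inr h, h2 x h, hn⟩
  have hTM : tMon R ((J' ∪ J'') \ (I' ∪ I'')) = tMon R (J' \ I') * tMon R (J'' \ I'') := by
    rw [hsd]
    exact tMon_union _ _ fun a ha b hb =>
      hlt a (Finset.mem_sdiff.mp ha).1 b (Finset.mem_sdiff.mp hb).1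
  have hell := ellJ_union J' J'' I' I'' hI' hI'' hlt
  have hcle : I'.card ≤ J'.card := Finset.card_le_card hI'
  rw [hc, hTM, hell]
  set c1 := I'.card
  set c2 := I''.card
  set m := J'.card
  set l1 := ellJ J' I'
  set l2 := ellJ J'' I''
  by_cases h1 : 2 ∣ c1 <;> by_cases h2 : 2 ∣ c2
  · -- both even: total even, everything vanishes
    have ht : 2 ∣ c1 + c2 := by omega
    simp [ht, h1, h2]
  · -- c1 even, c2 odd
    have ht : ¬ 2 ∣ c1 + c2 := by omega
    simp only [ht, h1, h2, if_true, if_false, not_true, not_false_iff, ite_true, ite_false,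
      zero_mul, mul_zero, zero_add, smul_zero, add_zero]
    rw [smul_mul_smul_comm, smul_smul]
    congr 1
    have he : (c1 + c2 - 1) / 2 = c1 / 2 + (c2 - 1) / 2 := by omega
    have hc1pow : ((-1 : R)) ^ c1 = 1 := Even.neg_one_pow (Nat.even_iff.mpr (by omega))
    have hodd2 : Odd c2 := Nat.odd_iff.mpr (by omega)
    have hsgn : ((-1 : R)) ^ (c2 * (m - c1)) = (-1) ^ m := by
      calc ((-1 : R)) ^ (c2 * (m - c1)) = ((-1 : R) ^ c2) ^ (m - c1) := pow_mul _ _ _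
        _ = ((-1 : R)) ^ (m - c1) := by rw [hodd2.neg_one_pow]
        _ = ((-1 : R)) ^ (m - c1) * (-1) ^ c1 := by rw [hc1pow, mul_one]
        _ = ((-1 : R)) ^ m := by rw [← pow_add, Nat.sub_add_cancel hcle]
    rw [he, pow_add, pow_add, pow_add, hsgn]
    ring
  · -- c1 odd, c2 even
    have ht : ¬ 2 ∣ c1 + c2 := by omega
    simp only [ht, h1, h2, if_true, if_false, not_true, not_false_iff, ite_true, ite_false,
      zero_mul, mul_zero, zero_add, smul_zero, add_zero]
    rw [smul_mul_smul_comm]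
    congr 1
    have he : (c1 + c2 - 1) / 2 = (c1 - 1) / 2 + c2 / 2 := by omega
    have hc2pow : ((-1 : R)) ^ c2 = 1 := Even.neg_one_pow (Nat.even_iff.mpr (by omega))
    have hsgn : ((-1 : R)) ^ (c2 * (m - c1)) = 1 := by
      rw [pow_mul, hc2pow, one_pow]
    rw [he, pow_add, pow_add, pow_add, hsgn]
    ring
  · -- both odd: total even
    have ht : 2 ∣ c1 + c2 := by omega
    simp [ht, h1, h2]
end

section
/- For every nonempty J ⊆ S, the alternating sum Σ_{i=1}^{#J} (−1)^{#J−i} τ⁻_{J∖{j_i}} equals 0 in the free algebra A, where j_1 < ⋯ < j_{#J} are the elements of J. -/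
lemma rank_sum {S : Type*} [LinearOrder S] {R : Type*} [CommRing R] (K : Finset S) :
    ∑ j ∈ K, (-1 : R) ^ ((K.filter (· < j)).card) = if Even K.card then 0 else 1 := by
  induction K using Finset.induction_on_max with
  | empty => simp
  | insert a s ha ih =>
    have has : a ∉ s := fun h => absurd (ha a h) (lt_irrefl a)
    rw [Finset.sum_insert has]
    have h1 : ((insert a s).filter (· < a)) = s := by
      ext x
      simp only [Finset.mem_filter, Finset.mem_insert]
      constructor
      · rintro ⟨h | h, hlt⟩
        · exact absurd hlt (by simp [h])
        · exact h
      · intro h; exact ⟨Or.inr h, ha x h⟩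
    have h2 : ∀ j ∈ s, ((insert a s).filter (· < j)) = s.filter (· < j) := by
      intro j hj
      ext x
      simp only [Finset.mem_filter, Finset.mem_insert]
      constructor
      · rintro ⟨h | h, hlt⟩
        · exact absurd hlt (by simp [h, le_of_lt (ha j hj)])
        · exact ⟨h, hlt⟩
      · rintro ⟨h, hlt⟩; exact ⟨Or.inr h, hlt⟩
    rw [h1, Finset.sum_congr rfl fun j hj => by rw [h2 j hj], ih,
      Finset.card_insert_of_notMem has]
    rcases Nat.even_or_odd s.card with h | h
    · rw [h.neg_one_pow, if_pos h]
      simp [Nat.even_add_one, h]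
    · rw [h.neg_one_pow, if_neg (Nat.not_even_iff_odd.mpr h)]
      simp [Nat.even_add_one, Nat.not_even_iff_odd.mpr h]

theorem stmt3 {S : Type*} [Fintype S] [LinearOrder S] {R : Type*} [CommRing R] (q : R)
    (J : Finset S) (hJ : J.Nonempty) :
    ∑ j ∈ J, ((-1 : R) ^ (J.card - (J.filter (· ≤ j)).card)) • tauMinus R q (J.erase j)
      = 0 := by
  classical
  simp only [tauMinus, Finset.smul_sum, smul_smul]
  have key : ∀ j ∈ J,
      (∑ I ∈ (J.erase j).powerset.filter (fun I => ¬ 2 ∣ I.card),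
        ((-1 : R) ^ (J.card - (J.filter (· ≤ j)).card) *
          ((-1 : R) ^ ellJ (J.erase j) I * (-q) ^ ((I.card - 1) / 2))) •
          tMon R ((J.erase j) \ I))
      = ∑ K ∈ J.powerset.filter (fun K => 2 ∣ K.card ∧ j ∈ K),
        ((-1 : R) ^ (J.card - (J.filter (· ≤ j)).card) *
          ((-1 : R) ^ ellJ (J.erase j) (K.erase j) * (-q) ^ (((K.erase j).card - 1) / 2))) •
          tMon R ((J.erase j) \ (K.erase j)) := by
    intro j hj
    refine Finset.sum_bij (fun I _ => insert j I) ?_ ?_ ?_ ?_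
    · intro I hI
      simp only [Finset.mem_filter, Finset.mem_powerset] at hI ⊢
      have hjI : j ∉ I := fun h => (Finset.mem_erase.mp (hI.1 h)).1 rfl
      refine ⟨?_, ?_, Finset.mem_insert_self j I⟩
      · exact Finset.insert_subset hj (hI.1.trans (Finset.erase_subset j J))
      · rw [Finset.card_insert_of_notMem hjI]
        omega
    · intro I hI I' hI' h
      simp only [Finset.mem_filter, Finset.mem_powerset] at hI hI'
      have hjI : j ∉ I := fun hh => (Finset.mem_erase.mp (hI.1 hh)).1 rfl
      have hjI' : j ∉ I' := fun hh => (Finset.mem_erase.mp (hI'.1 hh)).1 rfl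
      have h' : insert j I = insert j I' := h
      rw [← Finset.erase_insert hjI, ← Finset.erase_insert hjI', h']
    · intro K hK
      simp only [Finset.mem_filter, Finset.mem_powerset] at hK
      obtain ⟨hKJ, hKe, hjK⟩ := hK
      refine ⟨K.erase j, ?_, ?_⟩
      · simp only [Finset.mem_filter, Finset.mem_powerset]
        refine ⟨Finset.erase_subset_erase j hKJ, ?_⟩
        rw [Finset.card_erase_of_mem hjK]
        have := Finset.card_pos.mpr ⟨j, hjK⟩
        omega
      · exact Finset.insert_erase hjK
    · intro I hI
      simp only [Finset.mem_filter, Finset.mem_powerset] at hI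
      have hjI : j ∉ I := fun h => (Finset.mem_erase.mp (hI.1 h)).1 rfl
      rw [Finset.erase_insert hjI]
  rw [Finset.sum_congr rfl key]
  rw [Finset.sum_comm' (s := J) (t' := J.powerset.filter (fun K => 2 ∣ K.card))
    (s' := fun K => K) (by
      intro j K
      simp only [Finset.mem_filter, Finset.mem_powerset]
      constructor
      · rintro ⟨hjJ, hKJ, hKe, hjK⟩; exact ⟨hjK, hKJ, hKe⟩
      · rintro ⟨hjK, hKJ, hKe⟩; exact ⟨hKJ hjK, hKJ, hKe, hjK⟩)]
  refine Finset.sum_eq_zero fun K hK => ?_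
  simp only [Finset.mem_filter, Finset.mem_powerset] at hK
  obtain ⟨hKJ, hKe⟩ := hK
  have hterm : ∀ j ∈ K,
      ((-1 : R) ^ (J.card - (J.filter (· ≤ j)).card) *
        ((-1 : R) ^ ellJ (J.erase j) (K.erase j) * (-q) ^ (((K.erase j).card - 1) / 2))) •
        tMon R ((J.erase j) \ (K.erase j))
      = ((-1 : R) ^ ((K.filter (· < j)).card) *
          ((-1 : R) ^ (J.card + ellJ J K + 1) * (-q) ^ ((K.card - 2) / 2))) •
        tMon R (J \ K) := by
    intro j hjK
    have hjJ : j ∈ J := hKJ hjK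
    have hsd : (J.erase j) \ (K.erase j) = J \ K := by
      ext x
      simp only [Finset.mem_sdiff, Finset.mem_erase]
      constructor
      · rintro ⟨⟨hxj, hxJ⟩, h⟩
        exact ⟨hxJ, fun hxK => h ⟨hxj, hxK⟩⟩
      · rintro ⟨hxJ, hxK⟩
        have hxj : x ≠ j := fun h => hxK (h ▸ hjK)
        exact ⟨⟨hxj, hxJ⟩, fun h => hxK h.2⟩
    have hcard : (K.erase j).card = K.card - 1 := Finset.card_erase_of_mem hjK
    -- abbreviations
    set B := ((J \ K).filter (· < j)).card with hB
    set C := (K.filter (· < j)).card with hC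
    have h1 : (J.filter (· ≤ j)).card ≤ J.card := Finset.card_filter_le _ _
    have h2 : (J.filter (· ≤ j)).card = (J.filter (· < j)).card + 1 := by
      have : J.filter (· ≤ j) = insert j (J.filter (· < j)) := by
        ext x
        simp only [Finset.mem_filter, Finset.mem_insert]
        constructor
        · rintro ⟨hxJ, hxj⟩
          rcases eq_or_lt_of_le hxj with h | h
          · exact Or.inl h
          · exact Or.inr ⟨hxJ, h⟩
        · rintro (rfl | ⟨hxJ, hxj⟩)
          · exact ⟨hjJ, le_refl _⟩
          · exact ⟨hxJ, le_of_lt hxj⟩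
      rw [this, Finset.card_insert_of_notMem (by simp)]
    have h3 : (J.filter (· < j)).card = B + C := by
      rw [hB, hC, ← Finset.card_union_of_disjoint
        (Finset.disjoint_filter_filter Finset.sdiff_disjoint),
        ← Finset.filter_union, Finset.sdiff_union_of_subset hKJ]
    have h4 : ellJ J K = ellJ (J.erase j) (K.erase j) + B := by
      have : ellJ (J.erase j) (K.erase j) = ∑ i ∈ K.erase j, ((J \ K).filter (· < i)).card := by
        unfold ellJ
        rw [hsd]
      rw [this, hB]
      exact (Finset.sum_erase_add K _ hjK).symm
    have hE : (J.card - (J.filter (· ≤ j)).card) + ellJ (J.erase j) (K.erase j)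
        + 2 * B + C + 1 = J.card + ellJ J K := by omega
    have hpow : (-1 : R) ^ (J.card - (J.filter (· ≤ j)).card)
        * (-1 : R) ^ ellJ (J.erase j) (K.erase j)
        = (-1 : R) ^ C * (-1 : R) ^ (J.card + ellJ J K + 1) := by
      have h5 : J.card + ellJ J K + C + 1
          = ((J.card - (J.filter (· ≤ j)).card) + ellJ (J.erase j) (K.erase j))
            + 2 * (B + C + 1) := by omega
      have h6 : (-1 : R) ^ (J.card + ellJ J K + C + 1)
          = (-1 : R) ^ ((J.card - (J.filter (· ≤ j)).card) + ellJ (J.erase j) (K.erase j)) := by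
        rw [h5, pow_add, pow_mul, neg_one_sq, one_pow, mul_one]
      calc (-1 : R) ^ (J.card - (J.filter (· ≤ j)).card)
            * (-1 : R) ^ ellJ (J.erase j) (K.erase j)
          = (-1 : R) ^ ((J.card - (J.filter (· ≤ j)).card) + ellJ (J.erase j) (K.erase j)) := by
            rw [pow_add]
        _ = (-1 : R) ^ (J.card + ellJ J K + C + 1) := h6.symm
        _ = (-1 : R) ^ C * (-1 : R) ^ (J.card + ellJ J K + 1) := by
            rw [show J.card + ellJ J K + C + 1 = C + (J.card + ellJ J K + 1) by omega, pow_add]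
    rw [hsd, hcard, show K.card - 1 - 1 = K.card - 2 by omega]
    congr 1
    rw [← mul_assoc, hpow, mul_assoc]
  have hEv : Even K.card := by obtain ⟨c, hc⟩ := hKe; exact ⟨c, by omega⟩
  rw [Finset.sum_congr rfl hterm, ← Finset.sum_smul, ← Finset.sum_mul, rank_sum,
    if_pos hEv, zero_mul, zero_smul]
end

section
/- Let I_q(∅) be the two-sided ideal of A generated by the elements t_s² − q (s ∈ S) and t_r t_s + t_s t_r − 2q (s < r in S). Then for every J ⊆ S and s ∈ J, both t_s τ⁺_J − q τ⁻_J and t_s τ⁻_J − τ⁺_J lie in I_q(∅). -/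
/-- Generators of the ideal `I_q(𝔐)`. -/
def gens (R : Type*) [CommRing R] {S : Type*} [LinearOrder S] (q : R) (M : Set (Finset S)) :
    Set (FreeAlgebra R S) :=
  (Set.range fun s : S => FreeAlgebra.ι R s ^ 2 - algebraMap R _ q) ∪
  {x | ∃ r s : S, s < r ∧
      x = FreeAlgebra.ι R r * FreeAlgebra.ι R s + FreeAlgebra.ι R s * FreeAlgebra.ι R r
        - 2 * algebraMap R _ q} ∪
  {x | ∃ J ∈ M, x = tauMinus R q J}

/-- The two-sided ideal `I_q(𝔐)` of the free algebra. -/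
noncomputable def Iq (R : Type*) [CommRing R] {S : Type*} [LinearOrder S] (q : R)
    (M : Set (Finset S)) : TwoSidedIdeal (FreeAlgebra R S) :=
  TwoSidedIdeal.span (gens R q M)

section Comb

variable {S : Type*} [LinearOrder S] {R : Type*} [CommRing R]


lemma tMon_insert (m : S) (X : Finset S) (hm : m ∉ X) (hlt : ∀ x ∈ X, m < x) :
    tMon R (insert m X) = FreeAlgebra.ι R m * tMon R X := by
  unfold tMon
  rw [Finset.sort_insert (· ≤ ·) (fun b hb => (hlt b hb).le) hm, List.map_cons, List.prod_cons]

lemma sdiff_insert_insert' (m : S) (J I : Finset S) (hm : m ∉ J) :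
    insert m J \ insert m I = J \ I := by
  ext a
  simp only [Finset.mem_sdiff, Finset.mem_insert, not_or]
  constructor
  · rintro ⟨h1 | h1, h2, h3⟩
    · exact absurd h1 h2
    · exact ⟨h1, h3⟩
  · rintro ⟨h1, h2⟩
    exact ⟨Or.inr h1, fun e => hm (e ▸ h1), h2⟩

lemma ellJ_insert_insert (m : S) (J I : Finset S) (hm : m ∉ J) (hlt : ∀ x ∈ J, m < x)
    (hI : I ⊆ J) : ellJ (insert m J) (insert m I) = ellJ J I := by
  have hmI : m ∉ I := fun h => hm (hI h)
  unfold ellJ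
  rw [Finset.sum_insert hmI, sdiff_insert_insert' m J I hm]
  have h0 : ((J \ I).filter (· < m)).card = 0 := by
    rw [Finset.card_eq_zero, Finset.filter_eq_empty_iff]
    intro x hx
    exact not_lt.2 (hlt x (Finset.mem_sdiff.1 hx).1).le
  rw [h0, zero_add]

lemma ellJ_insert_not_mem (m : S) (J I : Finset S) (hm : m ∉ J) (hlt : ∀ x ∈ J, m < x)
    (hI : I ⊆ J) : ellJ (insert m J) I = ellJ J I + I.card := by
  have hmI : m ∉ I := fun h => hm (hI h)
  unfold ellJ
  rw [Finset.insert_sdiff_of_notMem _ hmI]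
  have h : ∀ i ∈ I, (((insert m (J \ I)).filter (· < i))).card
      = ((J \ I).filter (· < i)).card + 1 := by
    intro i hi
    rw [Finset.filter_insert, if_pos (hlt i (hI hi)),
      Finset.card_insert_of_notMem (fun h => hm (Finset.mem_sdiff.1 (Finset.mem_filter.1 h).1).1)]
  rw [Finset.sum_congr rfl h, Finset.sum_add_distrib, Finset.sum_const, smul_eq_mul, mul_one]

section
variable (q : R) (m : S) (J : Finset S)

lemma hdisj_aux (hm : m ∉ J) (p : Finset S → Prop) [DecidablePred p] :
    Disjoint (J.powerset.filter p) ((J.powerset.image (insert m)).filter p) := by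
  rw [Finset.disjoint_left]
  intro K hK hK'
  obtain ⟨I, hI, rfl⟩ := Finset.mem_image.1 (Finset.mem_filter.1 hK').1
  exact hm (Finset.mem_powerset.1 (Finset.mem_filter.1 hK).1 (Finset.mem_insert_self m I))

lemma hinj_aux (hm : m ∉ J) :
    ∀ I₁ ∈ J.powerset, ∀ I₂ ∈ J.powerset, insert m I₁ = insert m I₂ → I₁ = I₂ := by
  intro I₁ h₁ I₂ h₂ h
  have e₁ : m ∉ I₁ := fun hh => hm (Finset.mem_powerset.1 h₁ hh)
  have e₂ : m ∉ I₂ := fun hh => hm (Finset.mem_powerset.1 h₂ hh)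
  rw [← Finset.erase_insert e₁, ← Finset.erase_insert e₂, h]

lemma tauMinus_insert (hm : m ∉ J) (hlt : ∀ x ∈ J, m < x) :
    tauMinus R q (insert m J) = tauPlus R q J - FreeAlgebra.ι R m * tauMinus R q J := by
  have split : tauMinus R q (insert m J)
      = ((J.powerset.filter fun I => ¬ 2 ∣ I.card).sum
          (fun I => ((-1 : R) ^ ellJ (insert m J) I * (-q) ^ ((I.card - 1) / 2))
            • tMon R (insert m J \ I)))
      + ((J.powerset.image (insert m)).filter fun I => ¬ 2 ∣ I.card).sum
          (fun I => ((-1 : R) ^ ellJ (insert m J) I * (-q) ^ ((I.card - 1) / 2))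
            • tMon R (insert m J \ I)) := by
    rw [tauMinus, Finset.powerset_insert, Finset.filter_union,
      Finset.sum_union (hdisj_aux m J hm _)]
  have h2 : ((J.powerset.image (insert m)).filter fun I => ¬ 2 ∣ I.card).sum
      (fun I => ((-1 : R) ^ ellJ (insert m J) I * (-q) ^ ((I.card - 1) / 2))
        • tMon R (insert m J \ I)) = tauPlus R q J := by
    rw [Finset.filter_image, Finset.sum_image (by
      intro I₁ h₁ I₂ h₂ h
      exact hinj_aux m J hm I₁ (Finset.mem_filter.1 h₁).1 I₂ (Finset.mem_filter.1 h₂).1 h)]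
    have hfc : (J.powerset.filter fun I => ¬ 2 ∣ (insert m I).card)
        = J.powerset.filter fun I => 2 ∣ I.card := by
      apply Finset.filter_congr
      intro I hI
      have : m ∉ I := fun hh => hm (Finset.mem_powerset.1 hI hh)
      rw [Finset.card_insert_of_notMem this]
      constructor <;> (intro h; omega)
    rw [hfc, tauPlus]
    apply Finset.sum_congr rfl
    intro I hI
    obtain ⟨hIJ, hIc⟩ := Finset.mem_filter.1 hI
    have hIJ' := Finset.mem_powerset.1 hIJ
    have hmI : m ∉ I := fun hh => hm (hIJ' hh)
    rw [ellJ_insert_insert m J I hm hlt hIJ', sdiff_insert_insert' m J I hm,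
      Finset.card_insert_of_notMem hmI]
    norm_num
  have h1 : ((J.powerset.filter fun I => ¬ 2 ∣ I.card)).sum
      (fun I => ((-1 : R) ^ ellJ (insert m J) I * (-q) ^ ((I.card - 1) / 2))
        • tMon R (insert m J \ I)) = -(FreeAlgebra.ι R m * tauMinus R q J) := by
    rw [tauMinus, Finset.mul_sum, ← Finset.sum_neg_distrib]
    apply Finset.sum_congr rfl
    intro I hI
    obtain ⟨hIJ, hIc⟩ := Finset.mem_filter.1 hI
    have hIJ' := Finset.mem_powerset.1 hIJ
    have hmI : m ∉ I := fun hh => hm (hIJ' hh)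
    rw [ellJ_insert_not_mem m J I hm hlt hIJ', Finset.insert_sdiff_of_notMem _ hmI,
      tMon_insert m (J \ I) (fun h => hm (Finset.mem_sdiff.1 h).1)
        (fun x hx => hlt x (Finset.mem_sdiff.1 hx).1),
      mul_smul_comm]
    have hsgn : (-1 : R) ^ (ellJ J I + I.card) = -(-1) ^ ellJ J I := by
      have : I.card % 2 = 1 := by omega
      rcases Nat.odd_iff.2 this with ⟨k, hk⟩
      rw [pow_add, hk, pow_add, pow_mul]
      norm_num
    rw [hsgn, neg_mul, neg_smul]
  rw [split, h1, h2]
  abel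

lemma tauPlus_insert (hm : m ∉ J) (hlt : ∀ x ∈ J, m < x) :
    tauPlus R q (insert m J) = FreeAlgebra.ι R m * tauPlus R q J
      - algebraMap R (FreeAlgebra R S) q * tauMinus R q J := by
  have split : tauPlus R q (insert m J)
      = ((J.powerset.filter fun I => 2 ∣ I.card).sum
          (fun I => ((-1 : R) ^ ellJ (insert m J) I * (-q) ^ (I.card / 2))
            • tMon R (insert m J \ I)))
      + ((J.powerset.image (insert m)).filter fun I => 2 ∣ I.card).sum
          (fun I => ((-1 : R) ^ ellJ (insert m J) I * (-q) ^ (I.card / 2))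
            • tMon R (insert m J \ I)) := by
    rw [tauPlus, Finset.powerset_insert, Finset.filter_union,
      Finset.sum_union (hdisj_aux m J hm _)]
  have h2 : ((J.powerset.image (insert m)).filter fun I => 2 ∣ I.card).sum
      (fun I => ((-1 : R) ^ ellJ (insert m J) I * (-q) ^ (I.card / 2))
        • tMon R (insert m J \ I))
      = -(algebraMap R (FreeAlgebra R S) q * tauMinus R q J) := by
    rw [Finset.filter_image, Finset.sum_image (by
      intro I₁ h₁ I₂ h₂ h
      exact hinj_aux m J hm I₁ (Finset.mem_filter.1 h₁).1 I₂ (Finset.mem_filter.1 h₂).1 h)]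
    have hfc : (J.powerset.filter fun I => 2 ∣ (insert m I).card)
        = J.powerset.filter fun I => ¬ 2 ∣ I.card := by
      apply Finset.filter_congr
      intro I hI
      have : m ∉ I := fun hh => hm (Finset.mem_powerset.1 hI hh)
      rw [Finset.card_insert_of_notMem this]
      constructor <;> (intro h; omega)
    rw [hfc, tauMinus, Finset.mul_sum, ← Finset.sum_neg_distrib]
    apply Finset.sum_congr rfl
    intro I hI
    obtain ⟨hIJ, hIc⟩ := Finset.mem_filter.1 hI
    have hIJ' := Finset.mem_powerset.1 hIJ
    have hmI : m ∉ I := fun hh => hm (hIJ' hh)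
    rw [ellJ_insert_insert m J I hm hlt hIJ', sdiff_insert_insert' m J I hm,
      Finset.card_insert_of_notMem hmI]
    have hdiv : (I.card + 1) / 2 = (I.card - 1) / 2 + 1 := by omega
    rw [hdiv, pow_succ, mul_smul_comm, ← Algebra.smul_def, smul_smul, ← neg_smul]
    congr 1
    ring
  have h1 : ((J.powerset.filter fun I => 2 ∣ I.card)).sum
      (fun I => ((-1 : R) ^ ellJ (insert m J) I * (-q) ^ (I.card / 2))
        • tMon R (insert m J \ I)) = FreeAlgebra.ι R m * tauPlus R q J := by
    rw [tauPlus, Finset.mul_sum]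
    apply Finset.sum_congr rfl
    intro I hI
    obtain ⟨hIJ, hIc⟩ := Finset.mem_filter.1 hI
    have hIJ' := Finset.mem_powerset.1 hIJ
    have hmI : m ∉ I := fun hh => hm (hIJ' hh)
    rw [ellJ_insert_not_mem m J I hm hlt hIJ', Finset.insert_sdiff_of_notMem _ hmI,
      tMon_insert m (J \ I) (fun h => hm (Finset.mem_sdiff.1 h).1)
        (fun x hx => hlt x (Finset.mem_sdiff.1 hx).1),
      mul_smul_comm]
    have hsgn : (-1 : R) ^ (ellJ J I + I.card) = (-1) ^ ellJ J I := by
      obtain ⟨k, hk⟩ := hIc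
      rw [pow_add, hk, pow_mul]
      norm_num
    rw [hsgn]
  rw [split, h1, h2]
  abel

end

end Comb

section Aux

variable {S : Type*} [LinearOrder S] {R : Type*} [CommRing R]

lemma mem_iff_mk' {A : Type*} [Ring A] (I : TwoSidedIdeal A) (x : A) :
    x ∈ I ↔ I.ringCon.mk' x = 0 := by
  rw [TwoSidedIdeal.mem_iff]
  exact ⟨fun h => (RingCon.eq I.ringCon).mpr h, fun h => (RingCon.eq I.ringCon).mp h⟩

lemma mk'_surj {A : Type*} [Ring A] (c : RingCon A) : Function.Surjective c.mk' :=
  fun x => Quotient.inductionOn' x fun y => ⟨y, rfl⟩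

section Quot

variable (q : R)

noncomputable def piQ (q : R) : FreeAlgebra R S →+* (Iq R q (∅ : Set (Finset S))).ringCon.Quotient :=
  (Iq R q (∅ : Set (Finset S))).ringCon.mk'

local notation "π" => piQ (S := S) q


lemma pi_sq (s : S) :
    π (FreeAlgebra.ι R s) * π (FreeAlgebra.ι R s) = π (algebraMap R (FreeAlgebra R S) q) := by
  have hg : FreeAlgebra.ι R s ^ 2 - algebraMap R (FreeAlgebra R S) q
      ∈ Iq R q (∅ : Set (Finset S)) :=
    TwoSidedIdeal.subset_span (Or.inl (Or.inl ⟨s, rfl⟩))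
  rw [mem_iff_mk', map_sub, map_pow, sub_eq_zero, pow_two] at hg
  exact hg

lemma pi_comm (r s : S) (h : s < r) :
    π (FreeAlgebra.ι R r) * π (FreeAlgebra.ι R s)
      + π (FreeAlgebra.ι R s) * π (FreeAlgebra.ι R r)
      = 2 * π (algebraMap R (FreeAlgebra R S) q) := by
  have hg : FreeAlgebra.ι R r * FreeAlgebra.ι R s + FreeAlgebra.ι R s * FreeAlgebra.ι R r
      - 2 * algebraMap R (FreeAlgebra R S) q ∈ Iq R q (∅ : Set (Finset S)) :=
    TwoSidedIdeal.subset_span (Or.inl (Or.inr ⟨r, s, h, rfl⟩))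
  rw [mem_iff_mk', map_sub, map_add, map_mul, map_mul, map_mul, map_ofNat, sub_eq_zero] at hg
  exact hg

lemma pi_central (x : (Iq R q (∅ : Set (Finset S))).ringCon.Quotient) :
    π (algebraMap R (FreeAlgebra R S) q) * x = x * π (algebraMap R (FreeAlgebra R S) q) := by
  obtain ⟨y, rfl⟩ : ∃ y, π y = x := Quotient.inductionOn' x fun y => ⟨y, rfl⟩
  rw [← map_mul, ← map_mul, Algebra.commutes]

end Quot

end Aux

section KeyCalc

variable {Q : Type*} [Ring Q]

lemma case_eq (a Tm P M : Q) (hca : ∀ x y : Q, x * (a * y) = a * (x * y))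
    (hTT : Tm * Tm = a) :
    Tm * (Tm * P - a * M) = a * (P - Tm * M) ∧ Tm * (P - Tm * M) = Tm * P - a * M := by
  constructor
  · calc Tm * (Tm * P - a * M) = (Tm * Tm) * P - Tm * (a * M) := by noncomm_ring
      _ = a * P - a * (Tm * M) := by rw [hTT, hca]
      _ = a * (P - Tm * M) := by noncomm_ring
  · calc Tm * (P - Tm * M) = Tm * P - (Tm * Tm) * M := by noncomm_ring
      _ = Tm * P - a * M := by rw [hTT]

lemma case_ne (a Tm Ts P M : Q) (hca : ∀ x y : Q, x * (a * y) = a * (x * y))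
    (hc : Ts * Tm = 2 * a - Tm * Ts) (hP : Ts * P = a * M) (hM : Ts * M = P) :
    Ts * (Tm * P - a * M) = a * (P - Tm * M) ∧ Ts * (P - Tm * M) = Tm * P - a * M := by
  constructor
  · calc Ts * (Tm * P - a * M) = (Ts * Tm) * P - Ts * (a * M) := by noncomm_ring
      _ = (2 * a - Tm * Ts) * P - a * (Ts * M) := by rw [hc, hca]
      _ = (2 * a - Tm * Ts) * P - a * P := by rw [hM]
      _ = 2 * (a * P) - Tm * (Ts * P) - a * P := by noncomm_ring
      _ = 2 * (a * P) - Tm * (a * M) - a * P := by rw [hP]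
      _ = 2 * (a * P) - a * (Tm * M) - a * P := by rw [hca Tm M]
      _ = a * (P - Tm * M) := by noncomm_ring
  · calc Ts * (P - Tm * M) = Ts * P - (Ts * Tm) * M := by noncomm_ring
      _ = a * M - (2 * a - Tm * Ts) * M := by rw [hP, hc]
      _ = a * M - 2 * (a * M) + Tm * (Ts * M) := by noncomm_ring
      _ = a * M - 2 * (a * M) + Tm * P := by rw [hM]
      _ = Tm * P - a * M := by noncomm_ring

end KeyCalc

section Key

variable {S : Type*} [LinearOrder S] {R : Type*} [CommRing R] (q : R)

local notation "π" => piQ (S := S) q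

lemma key_tau (J : Finset S) : ∀ s ∈ J,
    π (FreeAlgebra.ι R s) * π (tauPlus R q J)
      = π (algebraMap R (FreeAlgebra R S) q) * π (tauMinus R q J) ∧
    π (FreeAlgebra.ι R s) * π (tauMinus R q J) = π (tauPlus R q J) := by
  induction J using Finset.induction_on_min with
  | empty => intro s hs; simp at hs
  | insert m J hlt IH =>
    intro s hs
    have hm : m ∉ J := fun h => lt_irrefl m (hlt m h)
    have hrecP : π (tauPlus R q (insert m J))
        = π (FreeAlgebra.ι R m) * π (tauPlus R q J)
          - π (algebraMap R (FreeAlgebra R S) q) * π (tauMinus R q J) := by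
      rw [tauPlus_insert q m J hm hlt, map_sub, map_mul, map_mul]
    have hrecM : π (tauMinus R q (insert m J))
        = π (tauPlus R q J) - π (FreeAlgebra.ι R m) * π (tauMinus R q J) := by
      rw [tauMinus_insert q m J hm hlt, map_sub, map_mul]
    have hca : ∀ x y, x * (π (algebraMap R (FreeAlgebra R S) q) * y)
        = π (algebraMap R (FreeAlgebra R S) q) * (x * y) := fun x y => by
      rw [← mul_assoc, ← pi_central q x, mul_assoc]
    rw [hrecP, hrecM]
    rcases Finset.mem_insert.1 hs with rfl | hsJ
    · exact case_eq _ _ _ _ hca (pi_sq q s)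
    · have hc : π (FreeAlgebra.ι R s) * π (FreeAlgebra.ι R m)
          = 2 * π (algebraMap R (FreeAlgebra R S) q)
            - π (FreeAlgebra.ι R m) * π (FreeAlgebra.ι R s) :=
        eq_sub_of_add_eq (pi_comm q s m (hlt s hsJ))
      exact case_ne _ _ _ _ _ hca hc (IH s hsJ).1 (IH s hsJ).2

end Key


theorem stmt6 {S : Type*} [Fintype S] [LinearOrder S] {R : Type*} [CommRing R] (q : R)
    (J : Finset S) (s : S) (hs : s ∈ J) :
    FreeAlgebra.ι R s * tauPlus R q J - q • tauMinus R q J ∈ Iq R q (∅ : Set (Finset S)) ∧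
    FreeAlgebra.ι R s * tauMinus R q J - tauPlus R q J ∈ Iq R q (∅ : Set (Finset S)) := by
  constructor
  · rw [Algebra.smul_def, mem_iff_mk', map_sub, map_mul, map_mul, sub_eq_zero]
    exact (key_tau q J s hs).1
  · rw [mem_iff_mk', map_sub, map_mul, sub_eq_zero]
    exact (key_tau q J s hs).2
end

section
/- Let J ⊆ S and s ∈ J. Then τ⁺_J t_s − (−1)^{#J+1} q τ⁻_J ∈ I_q(∅) and τ⁻_J t_s − (−1)^{#J+1} τ⁺_J ∈ I_q(∅). -/
/-! ### Auxiliary congruence lemmas for two-sided ideals -/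

section Cong

variable {T : Type*} [Ring T] {I : TwoSidedIdeal T}

lemma cong_refl (a : T) : a - a ∈ I := by simp [I.zero_mem]

lemma cong_add {a b c d : T} (h1 : a - b ∈ I) (h2 : c - d ∈ I) : (a + c) - (b + d) ∈ I := by
  have := I.add_mem h1 h2
  rwa [sub_add_sub_comm] at this

lemma cong_sub {a b c d : T} (h1 : a - b ∈ I) (h2 : c - d ∈ I) : (a - c) - (b - d) ∈ I := by
  have := I.sub_mem h1 h2
  rwa [sub_sub_sub_comm] at this

lemma cong_mul_left (x : T) {a b : T} (h : a - b ∈ I) : x * a - x * b ∈ I := by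
  have := I.mul_mem_left x _ h
  rwa [mul_sub] at this

lemma cong_mul_right (x : T) {a b : T} (h : a - b ∈ I) : a * x - b * x ∈ I := by
  have := I.mul_mem_right _ x h
  rwa [sub_mul] at this

lemma cong_trans {a b c : T} (h1 : a - b ∈ I) (h2 : b - c ∈ I) : a - c ∈ I := by
  have := I.add_mem h1 h2
  rwa [sub_add_sub_cancel] at this

variable {R : Type*} [CommRing R] [Algebra R T]

lemma cong_smul (r : R) {a b : T} (h : a - b ∈ I) : r • a - r • b ∈ I := by
  rw [← smul_sub, Algebra.smul_def]
  exact I.mul_mem_left _ _ h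

end Cong

/-! ### Key abstract computations -/

section Abstract

variable {R : Type*} [CommRing R] {T : Type*} [Ring T] [Algebra R T] {I : TwoSidedIdeal T}

lemma mul_algebraMap_eq_smul (x : T) (r : R) : x * algebraMap R T r = r • x := by
  rw [Algebra.smul_def, Algebra.commutes]

lemma case_top_minus (M P tj : T) (ε q : R) (hεε : ε * ε = 1)
    (htj : tj * tj - algebraMap R T q ∈ I) :
    (M * tj + ε • P) * tj - ε • (P * tj + (ε * q) • M) ∈ I := by
  have h1 : (M * tj + ε • P) * tj = M * (tj * tj) + ε • (P * tj) := by
    rw [add_mul, mul_assoc, smul_mul_assoc]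
  have h2 : ε • (P * tj + (ε * q) • M) = M * algebraMap R T q + ε • (P * tj) := by
    rw [smul_add, smul_smul, ← mul_assoc, hεε, one_mul, mul_algebraMap_eq_smul, add_comm]
  rw [h1, h2]
  exact cong_add (cong_mul_left M htj) (cong_refl _)

lemma case_top_plus (M P tj : T) (ε q : R) (hεε : ε * ε = 1)
    (htj : tj * tj - algebraMap R T q ∈ I) :
    (P * tj + (ε * q) • M) * tj - (ε * q) • (M * tj + ε • P) ∈ I := by
  have h1 : (P * tj + (ε * q) • M) * tj = P * (tj * tj) + (ε * q) • (M * tj) := by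
    rw [add_mul, mul_assoc, smul_mul_assoc]
  have hsc : ε * q * ε = q := by
    rw [mul_comm (ε * q) ε, ← mul_assoc, hεε, one_mul]
  have h2 : (ε * q) • (M * tj + ε • P) = P * algebraMap R T q + (ε * q) • (M * tj) := by
    rw [smul_add, smul_smul, hsc, mul_algebraMap_eq_smul, add_comm]
  rw [h1, h2]
  exact cong_add (cong_mul_left P htj) (cong_refl _)

lemma two_mul_algebraMap (x : T) (q : R) : x * (2 * algebraMap R T q) = (2 * q) • x := by
  rw [← map_ofNat (algebraMap R T) 2, ← map_mul, mul_algebraMap_eq_smul]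

lemma case_calc_minus (M P tj ts : T) (ε q : R) (hεε : ε * ε = 1)
    (hrel : tj * ts - (2 * algebraMap R T q - ts * tj) ∈ I)
    (ih1 : P * ts - (-(ε * q)) • M ∈ I)
    (ih2 : M * ts - (-ε) • P ∈ I) :
    (M * tj + ε • P) * ts - ε • (P * tj + (ε * q) • M) ∈ I := by
  have h1 : (M * tj + ε • P) * ts = M * (tj * ts) + ε • (P * ts) := by
    rw [add_mul, mul_assoc, smul_mul_assoc]
  have c1 : M * (tj * ts) + ε • (P * ts)
      - (M * (2 * algebraMap R T q - ts * tj) + ε • (P * ts)) ∈ I :=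
    cong_add (cong_mul_left M hrel) (cong_refl _)
  have h2 : M * (2 * algebraMap R T q - ts * tj) + ε • (P * ts)
      = ((2 * q) • M - (M * ts) * tj) + ε • (P * ts) := by
    rw [mul_sub, two_mul_algebraMap, mul_assoc]
  have c2 : ((2 * q) • M - (M * ts) * tj) + ε • (P * ts)
      - (((2 * q) • M - ((-ε) • P) * tj) + ε • ((-(ε * q)) • M)) ∈ I :=
    cong_add (cong_sub (cong_refl _) (cong_mul_right tj ih2)) (cong_smul ε ih1)
  have h3 : ((2 * q) • M - ((-ε) • P) * tj) + ε • ((-(ε * q)) • M)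
      = ε • (P * tj + (ε * q) • M) := by
    rw [neg_smul, neg_mul, sub_neg_eq_add, smul_mul_assoc, smul_smul, mul_neg, ← mul_assoc,
      hεε, one_mul, neg_smul, smul_add, smul_smul, ← mul_assoc, hεε, one_mul, two_mul, add_smul]
    abel
  rw [h1]
  refine cong_trans c1 ?_
  rw [h2, ← h3]
  exact c2

lemma case_calc_plus (M P tj ts : T) (ε q : R) (hεε : ε * ε = 1)
    (hrel : tj * ts - (2 * algebraMap R T q - ts * tj) ∈ I)
    (ih1 : P * ts - (-(ε * q)) • M ∈ I)
    (ih2 : M * ts - (-ε) • P ∈ I) :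
    (P * tj + (ε * q) • M) * ts - (ε * q) • (M * tj + ε • P) ∈ I := by
  have h1 : (P * tj + (ε * q) • M) * ts = P * (tj * ts) + (ε * q) • (M * ts) := by
    rw [add_mul, mul_assoc, smul_mul_assoc]
  have c1 : P * (tj * ts) + (ε * q) • (M * ts)
      - (P * (2 * algebraMap R T q - ts * tj) + (ε * q) • (M * ts)) ∈ I :=
    cong_add (cong_mul_left P hrel) (cong_refl _)
  have h2 : P * (2 * algebraMap R T q - ts * tj) + (ε * q) • (M * ts)
      = ((2 * q) • P - (P * ts) * tj) + (ε * q) • (M * ts) := by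
    rw [mul_sub, two_mul_algebraMap, mul_assoc]
  have c2 : ((2 * q) • P - (P * ts) * tj) + (ε * q) • (M * ts)
      - (((2 * q) • P - ((-(ε * q)) • M) * tj) + (ε * q) • ((-ε) • P)) ∈ I :=
    cong_add (cong_sub (cong_refl _) (cong_mul_right tj ih1)) (cong_smul (ε * q) ih2)
  have hsc : ε * q * ε = q := by
    rw [mul_comm (ε * q) ε, ← mul_assoc, hεε, one_mul]
  have h3 : ((2 * q) • P - ((-(ε * q)) • M) * tj) + (ε * q) • ((-ε) • P)
      = (ε * q) • (M * tj + ε • P) := by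
    rw [neg_smul, neg_mul, sub_neg_eq_add, smul_mul_assoc, smul_smul, mul_neg, hsc, neg_smul,
      smul_add, smul_smul, hsc, two_mul, add_smul]
    abel
  rw [h1]
  refine cong_trans c1 ?_
  rw [h2, ← h3]
  exact c2

end Abstract

/-! ### Combinatorial recursion lemmas -/

section Rec

variable {S : Type*} [LinearOrder S] {R : Type*} [CommRing R]

open Finset

lemma tMon_insert_max (R : Type*) [CommRing R] {K : Finset S} {j : S} (hjK : j ∉ K)
    (hmax : ∀ x ∈ K, x < j) :
    tMon R (insert j K) = tMon R K * FreeAlgebra.ι R j := by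
  have hsort : (insert j K).sort (· ≤ ·) = K.sort (· ≤ ·) ++ [j] := by
    have p1 : List.Perm ((insert j K).sort (· ≤ ·)) (j :: K.sort (· ≤ ·)) :=
      (Finset.sort_perm_toList _ _).trans ((Finset.toList_insert hjK).trans
        (((Finset.sort_perm_toList _ _).symm).cons j))
    have p2 : List.Perm (j :: K.sort (· ≤ ·)) (K.sort (· ≤ ·) ++ [j]) :=
      (List.perm_append_singleton j _).symm
    apply List.Perm.eq_of_pairwise' (Finset.pairwise_sort _ _) ?_ (p1.trans p2)
    rw [List.pairwise_append]
    refine ⟨Finset.pairwise_sort _ _, List.pairwise_singleton _ _, ?_⟩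
    intro x hx y hy
    rw [List.mem_singleton] at hy
    subst hy
    exact (hmax x ((Finset.mem_sort _).1 hx)).le
  rw [tMon, tMon, hsort, List.map_append, List.prod_append]
  simp

lemma sdiff_insert_not_mem {J' I : Finset S} {j : S} (hj : j ∉ J') (hI : I ⊆ J') :
    insert j J' \ I = insert j (J' \ I) := by
  have hjI : j ∉ I := fun h => hj (hI h)
  ext x
  simp only [Finset.mem_sdiff, Finset.mem_insert]
  constructor
  · rintro ⟨hx | hx, hxI⟩
    · exact Or.inl hx
    · exact Or.inr ⟨hx, hxI⟩
  · rintro (rfl | ⟨hx, hxI⟩)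
    · exact ⟨Or.inl rfl, hjI⟩
    · exact ⟨Or.inr hx, hxI⟩

lemma sdiff_insert_insert {J' I : Finset S} {j : S} (hj : j ∉ J') :
    insert j J' \ insert j I = J' \ I := by
  ext x
  simp only [Finset.mem_sdiff, Finset.mem_insert, not_or]
  constructor
  · rintro ⟨hx | hx, hne, hxI⟩
    · exact absurd hx hne
    · exact ⟨hx, hxI⟩
  · rintro ⟨hx, hxI⟩
    exact ⟨Or.inr hx, fun h => hj (h ▸ hx), hxI⟩

lemma ellJ_insert_not_mem_s8 {J' I : Finset S} {j : S} (hj : j ∉ J') (hmax : ∀ x ∈ J', x < j)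
    (hI : I ⊆ J') : ellJ (insert j J') I = ellJ J' I := by
  unfold ellJ
  refine Finset.sum_congr rfl fun i hi => ?_
  rw [sdiff_insert_not_mem hj hI, Finset.filter_insert, if_neg]
  exact fun h => absurd (h.trans (hmax i (hI hi))) (lt_irrefl j)

lemma ellJ_insert_mem {J' I : Finset S} {j : S} (hj : j ∉ J') (hmax : ∀ x ∈ J', x < j)
    (hI : I ⊆ J') :
    ellJ (insert j J') (insert j I) = (J'.card - I.card) + ellJ J' I := by
  have hjI : j ∉ I := fun h => hj (hI h)
  unfold ellJ
  rw [sdiff_insert_insert hj, Finset.sum_insert hjI]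
  congr 1
  rw [Finset.filter_true_of_mem, Finset.card_sdiff_of_subset hI]
  intro x hx
  exact hmax x (Finset.mem_sdiff.1 hx).1

lemma sum_powerset_filter_insert {β : Type*} [AddCommMonoid β] {j : S} {J' : Finset S}
    (hj : j ∉ J') (P : Finset S → Prop) [DecidablePred P] (f : Finset S → β) :
    ∑ I ∈ (insert j J').powerset.filter P, f I =
      (∑ I ∈ J'.powerset.filter P, f I) +
      ∑ I ∈ J'.powerset.filter (fun I => P (insert j I)), f (insert j I) := by
  rw [Finset.sum_filter, Finset.sum_powerset_insert hj, ← Finset.sum_filter, ← Finset.sum_filter]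

lemma tauMinus_insert_s8 (q : R) {J' : Finset S} {j : S} (hj : j ∉ J') (hmax : ∀ x ∈ J', x < j) :
    tauMinus R q (insert j J') =
      tauMinus R q J' * FreeAlgebra.ι R j + ((-1 : R) ^ J'.card) • tauPlus R q J' := by
  unfold tauMinus tauPlus
  rw [sum_powerset_filter_insert hj]
  congr 1
  · rw [Finset.sum_mul]
    refine Finset.sum_congr rfl fun I hI => ?_
    rw [Finset.mem_filter, Finset.mem_powerset] at hI
    obtain ⟨hIJ, _⟩ := hI
    have hjd : j ∉ J' \ I := fun h => hj (Finset.mem_sdiff.1 h).1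
    have hmd : ∀ x ∈ J' \ I, x < j := fun x hx => hmax x (Finset.mem_sdiff.1 hx).1
    rw [sdiff_insert_not_mem hj hIJ, tMon_insert_max R hjd hmd,
      ellJ_insert_not_mem_s8 hj hmax hIJ, smul_mul_assoc]
  · rw [Finset.smul_sum]
    have hfil : J'.powerset.filter (fun I => ¬ 2 ∣ (insert j I).card) =
        J'.powerset.filter (fun I => 2 ∣ I.card) := by
      refine Finset.filter_congr fun I hI => ?_
      rw [Finset.mem_powerset] at hI
      have hjI : j ∉ I := fun h => hj (hI h)
      rw [Finset.card_insert_of_notMem hjI]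
      constructor <;> intro h <;> omega
    rw [hfil]
    refine Finset.sum_congr rfl fun I hI => ?_
    rw [Finset.mem_filter, Finset.mem_powerset] at hI
    obtain ⟨hIJ, heven⟩ := hI
    have hjI : j ∉ I := fun h => hj (hIJ h)
    obtain ⟨c, hc⟩ := heven
    obtain ⟨d, hd⟩ := Nat.exists_eq_add_of_le (Finset.card_le_card hIJ)
    rw [sdiff_insert_insert hj, ellJ_insert_mem hj hmax hIJ,
      Finset.card_insert_of_notMem hjI, smul_smul]
    congr 1
    rw [hd, hc, Nat.add_sub_cancel_left]
    have he0 : 2 * c / 2 = c := by omega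
    have he1 : (2 * c + 1 - 1) / 2 = c := by omega
    rw [he0, he1]
    have h : (-1:R)^(2*c+d) = ((-1:R)^d) := by rw [pow_add, pow_mul]; simp
    rw [h]
    ring

lemma tauPlus_insert_s8 (q : R) {J' : Finset S} {j : S} (hj : j ∉ J') (hmax : ∀ x ∈ J', x < j) :
    tauPlus R q (insert j J') =
      tauPlus R q J' * FreeAlgebra.ι R j + ((-1 : R) ^ J'.card * q) • tauMinus R q J' := by
  unfold tauMinus tauPlus
  rw [sum_powerset_filter_insert hj]
  congr 1
  · rw [Finset.sum_mul]
    refine Finset.sum_congr rfl fun I hI => ?_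
    rw [Finset.mem_filter, Finset.mem_powerset] at hI
    obtain ⟨hIJ, _⟩ := hI
    have hjd : j ∉ J' \ I := fun h => hj (Finset.mem_sdiff.1 h).1
    have hmd : ∀ x ∈ J' \ I, x < j := fun x hx => hmax x (Finset.mem_sdiff.1 hx).1
    rw [sdiff_insert_not_mem hj hIJ, tMon_insert_max R hjd hmd,
      ellJ_insert_not_mem_s8 hj hmax hIJ, smul_mul_assoc]
  · rw [Finset.smul_sum]
    have hfil : J'.powerset.filter (fun I => 2 ∣ (insert j I).card) =
        J'.powerset.filter (fun I => ¬ 2 ∣ I.card) := by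
      refine Finset.filter_congr fun I hI => ?_
      rw [Finset.mem_powerset] at hI
      have hjI : j ∉ I := fun h => hj (hI h)
      rw [Finset.card_insert_of_notMem hjI]
      constructor <;> intro h <;> omega
    rw [hfil]
    refine Finset.sum_congr rfl fun I hI => ?_
    rw [Finset.mem_filter, Finset.mem_powerset] at hI
    obtain ⟨hIJ, hodd⟩ := hI
    have hjI : j ∉ I := fun h => hj (hIJ h)
    have hoddn : I.card % 2 = 1 := Nat.two_dvd_ne_zero.mp hodd
    obtain ⟨c, hc⟩ : ∃ c, I.card = 2 * c + 1 := ⟨I.card / 2, by omega⟩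
    obtain ⟨d, hd⟩ := Nat.exists_eq_add_of_le (Finset.card_le_card hIJ)
    rw [sdiff_insert_insert hj, ellJ_insert_mem hj hmax hIJ,
      Finset.card_insert_of_notMem hjI, smul_smul]
    congr 1
    rw [hd, hc, Nat.add_sub_cancel_left]
    have he1 : (2 * c + 1 + 1) / 2 = c + 1 := by omega
    have he2 : (2 * c + 1 - 1) / 2 = c := by omega
    rw [he1, he2]
    have h : (-1:R)^(2*c+1+d) = -((-1:R)^d) := by
      rw [pow_add, pow_add, pow_mul]; simp
    rw [h]
    ring

end Rec

/-! ### Generator membership -/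

section Gens

variable {S : Type*} [LinearOrder S] {R : Type*} [CommRing R]

lemma gen_sq_mem (q : R) (M : Set (Finset S)) (s : S) :
    FreeAlgebra.ι R s * FreeAlgebra.ι R s - algebraMap R _ q ∈ Iq R q M := by
  have : FreeAlgebra.ι R s ^ 2 - algebraMap R _ q ∈ gens R q M :=
    Or.inl (Or.inl ⟨s, rfl⟩)
  have h := TwoSidedIdeal.subset_span this
  rwa [pow_two] at h

lemma gen_comm_mem (q : R) (M : Set (Finset S)) {r s : S} (h : s < r) :
    FreeAlgebra.ι R r * FreeAlgebra.ι R s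
      - (2 * algebraMap R _ q - FreeAlgebra.ι R s * FreeAlgebra.ι R r) ∈ Iq R q M := by
  have hg : FreeAlgebra.ι R r * FreeAlgebra.ι R s + FreeAlgebra.ι R s * FreeAlgebra.ι R r
      - 2 * algebraMap R _ q ∈ gens R q M := Or.inl (Or.inr ⟨r, s, h, rfl⟩)
  have h2 := TwoSidedIdeal.subset_span hg
  have he : FreeAlgebra.ι R r * FreeAlgebra.ι R s
      - (2 * algebraMap R _ q - FreeAlgebra.ι R s * FreeAlgebra.ι R r)
      = FreeAlgebra.ι R r * FreeAlgebra.ι R s + FreeAlgebra.ι R s * FreeAlgebra.ι R r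
      - 2 * algebraMap R _ q := by abel
  rwa [he]

end Gens

/-! ### Main induction -/

section Main

variable {S : Type*} [LinearOrder S] {R : Type*} [CommRing R]

lemma key_induction (q : R) : ∀ (n : ℕ) (J : Finset S), J.card = n → ∀ s ∈ J,
    (tauPlus R q J * FreeAlgebra.ι R s
        - (((-1 : R) ^ (J.card + 1)) * q) • tauMinus R q J ∈ Iq R q (∅ : Set (Finset S))) ∧
    (tauMinus R q J * FreeAlgebra.ι R s
        - ((-1 : R) ^ (J.card + 1)) • tauPlus R q J ∈ Iq R q (∅ : Set (Finset S))) := by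
  intro n
  induction n with
  | zero =>
    intro J hJ s hs
    rw [Finset.card_eq_zero] at hJ
    subst hJ
    simp at hs
  | succ n ih =>
    intro J hJ s hs
    have hne : J.Nonempty := ⟨s, hs⟩
    set j := J.max' hne with hjdef
    set J' := J.erase j with hJ'def
    have hjJ : j ∈ J := J.max'_mem hne
    have hjJ' : j ∉ J' := Finset.notMem_erase _ _
    have hmax : ∀ x ∈ J', x < j := fun x hx =>
      lt_of_le_of_ne (Finset.le_max' J x (Finset.mem_of_mem_erase hx))
        (Finset.ne_of_mem_erase hx)
    have hins : J = insert j J' := (Finset.insert_erase hjJ).symm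
    have hcard' : J'.card = n := by
      rw [hJ'def, Finset.card_erase_of_mem hjJ, hJ]
      omega
    set M := tauMinus R q J' with hM
    set P := tauPlus R q J' with hP
    set tj := FreeAlgebra.ι R j with htjdef
    set ε := ((-1 : R) ^ n) with hε
    have hεε : ε * ε = 1 := by
      rw [hε, ← pow_add]
      exact Even.neg_one_pow ⟨n, rfl⟩
    have rec1 : tauMinus R q J = M * tj + ε • P := by
      rw [hins, tauMinus_insert_s8 q hjJ' hmax, hcard']
    have rec2 : tauPlus R q J = P * tj + (ε * q) • M := by
      rw [hins, tauPlus_insert_s8 q hjJ' hmax, hcard']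
    have hpow : ((-1 : R) ^ (J.card + 1)) = ε := by
      rw [hJ, hε, pow_succ, pow_succ]
      ring
    have htjtj : tj * tj - algebraMap R (FreeAlgebra R S) q ∈ Iq R q (∅ : Set (Finset S)) :=
      gen_sq_mem q _ j
    rw [rec1, rec2, hpow]
    by_cases hsj : s = j
    · subst hsj
      exact ⟨case_top_plus M P tj ε q hεε htjtj, case_top_minus M P tj ε q hεε htjtj⟩
    · have hsJ' : s ∈ J' := Finset.mem_erase.mpr ⟨hsj, hs⟩
      have hslt : s < j := hmax s hsJ'
      have hrel : tj * FreeAlgebra.ι R s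
          - (2 * algebraMap R (FreeAlgebra R S) q - FreeAlgebra.ι R s * tj)
          ∈ Iq R q (∅ : Set (Finset S)) := gen_comm_mem q _ hslt
      obtain ⟨ih1, ih2⟩ := ih J' hcard' s hsJ'
      rw [hcard'] at ih1 ih2
      have hsc1 : ((-1 : R) ^ (n + 1)) * q = -(ε * q) := by rw [hε, pow_succ]; ring
      have hsc2 : ((-1 : R) ^ (n + 1)) = -ε := by rw [hε, pow_succ]; ring
      rw [hsc1] at ih1
      rw [hsc2] at ih2
      exact ⟨case_calc_plus M P tj (FreeAlgebra.ι R s) ε q hεε hrel ih1 ih2,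
        case_calc_minus M P tj (FreeAlgebra.ι R s) ε q hεε hrel ih1 ih2⟩

end Main

theorem stmt8 {S : Type*} [Fintype S] [LinearOrder S] {R : Type*} [CommRing R] (q : R)
    (J : Finset S) (s : S) (hs : s ∈ J) :
    tauPlus R q J * FreeAlgebra.ι R s
        - (((-1 : R) ^ (J.card + 1)) * q) • tauMinus R q J ∈ Iq R q (∅ : Set (Finset S)) ∧
    tauMinus R q J * FreeAlgebra.ι R s
        - ((-1 : R) ^ (J.card + 1)) • tauPlus R q J ∈ Iq R q (∅ : Set (Finset S)) := by
  exact key_induction q J.card J rfl s hs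
end

section
/- Let 𝔐 ⊆ 2^S be any set system and let I_q(𝔐) ⊆ A be the two-sided ideal generated by t_s² − q (s ∈ S), t_r t_s + t_s t_r − 2q (s < r), and τ⁻_J for J ∈ 𝔐. If J ⊆ S is nonempty and τ⁻_J ∈ I_q(𝔐), then τ⁺_J ∈ I_q(𝔐). -/
lemma tMon_insert_s9 (R : Type*) [CommRing R] {S : Type*} [LinearOrder S] {a : S} {L : Finset S}
    (h₁ : ∀ b ∈ L, a ≤ b) (h₂ : a ∉ L) :
    tMon R (insert a L) = FreeAlgebra.ι R a * tMon R L := by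
  unfold tMon
  rw [Finset.sort_insert _ h₁ h₂, List.map_cons, List.prod_cons]

lemma ellJ_insert {S : Type*} [LinearOrder S] {J I : Finset S} {a : S}
    (haJ : a ∈ J) (hmin : ∀ b ∈ J, a ≤ b) (hIJ : I ⊆ J.erase a) :
    ellJ J I = ellJ J (insert a I) + I.card := by
  have haI : a ∉ I := fun h => (Finset.mem_erase.1 (hIJ h)).1 rfl
  have key : ∀ i ∈ I, ((J \ insert a I).filter (· < i)).card + 1
      = ((J \ I).filter (· < i)).card := by
    intro i hi
    have hia : i ≠ a := (Finset.mem_erase.1 (hIJ hi)).1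
    have hai : a < i := lt_of_le_of_ne (hmin i (Finset.mem_of_mem_erase (hIJ hi))) (Ne.symm hia)
    have hmem : a ∈ (J \ I).filter (· < i) := by
      simp [Finset.mem_sdiff, haJ, haI, hai]
    have hpos : 0 < ((J \ I).filter (· < i)).card := Finset.card_pos.2 ⟨a, hmem⟩
    rw [Finset.sdiff_insert, Finset.filter_erase, Finset.card_erase_of_mem hmem]
    omega
  unfold ellJ
  rw [Finset.sum_insert haI]
  have h0 : ((J \ insert a I).filter (· < a)).card = 0 := by
    rw [Finset.card_eq_zero, Finset.filter_eq_empty_iff]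
    intro b hb
    exact not_lt.2 (hmin b (Finset.mem_sdiff.1 hb).1)
  rw [h0, zero_add]
  calc ∑ i ∈ I, ((J \ I).filter (· < i)).card
      = ∑ i ∈ I, (((J \ insert a I).filter (· < i)).card + 1) :=
        Finset.sum_congr rfl fun i hi => (key i hi).symm
    _ = _ := by rw [Finset.sum_add_distrib, Finset.sum_const, smul_eq_mul, mul_one]

lemma tau_key {S : Type*} [LinearOrder S] {R : Type*} [CommRing R] (q : R)
    {J : Finset S} {a : S} (haJ : a ∈ J) (hmin : ∀ b ∈ J, a ≤ b) :
    tauPlus R q J = FreeAlgebra.ι R a * tauMinus R q J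
      - ∑ I ∈ (J.erase a).powerset,
          (if ¬ 2 ∣ I.card then
            ((-1 : R) ^ ellJ J I * (-q) ^ ((I.card - 1) / 2)) •
              ((FreeAlgebra.ι R a ^ 2 - algebraMap R (FreeAlgebra R S) q)
                * tMon R (J \ insert a I))
          else 0) := by
  classical
  have haK : a ∉ J.erase a := Finset.notMem_erase a J
  have hJK : insert a (J.erase a) = J := Finset.insert_erase haJ
  have split : ∀ f : Finset S → FreeAlgebra R S,
      ∑ I ∈ J.powerset, f I
        = ∑ I ∈ (J.erase a).powerset, f I + ∑ I ∈ (J.erase a).powerset, f (insert a I) := by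
    intro f
    conv_lhs => rw [← hJK]
    rw [Finset.sum_powerset_insert haK]
  rw [tauPlus, tauMinus, Finset.sum_filter, Finset.sum_filter, split, split, mul_add,
    Finset.mul_sum, Finset.mul_sum, ← Finset.sum_add_distrib, ← Finset.sum_add_distrib,
    ← Finset.sum_sub_distrib]
  refine Finset.sum_congr rfl fun I hI => ?_
  have hIK : I ⊆ J.erase a := Finset.mem_powerset.1 hI
  have haI : a ∉ I := fun h => (Finset.mem_erase.1 (hIK h)).1 rfl
  have hcard : (insert a I).card = I.card + 1 := Finset.card_insert_of_notMem haI
  have hell : ellJ J I = ellJ J (insert a I) + I.card := ellJ_insert haJ hmin hIK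
  have haJI : a ∈ J \ I := Finset.mem_sdiff.2 ⟨haJ, haI⟩
  have hmon : tMon R (J \ I) = FreeAlgebra.ι R a * tMon R (J \ insert a I) := by
    have h1 : J \ insert a I = (J \ I).erase a := Finset.sdiff_insert J I a
    have h2 : insert a (J \ insert a I) = J \ I := by
      rw [h1, Finset.insert_erase haJI]
    rw [← h2, tMon_insert_s9]
    · intro b hb
      exact hmin b (Finset.mem_sdiff.1 (Finset.mem_of_mem_erase (h1 ▸ hb))).1
    · rw [h1]; exact Finset.notMem_erase a _
  by_cases h2 : 2 ∣ I.card
  · have h2' : ¬ 2 ∣ (insert a I).card := by rw [hcard]; omega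
    have h20 : I.card % 2 = 0 := by omega
    rw [if_pos h2, if_neg h2', if_neg (not_not_intro h2), if_pos h2',
      if_neg (not_not_intro h2)]
    have hcoef : ((-1 : R) ^ ellJ J I * (-q) ^ (I.card / 2))
        = (-1 : R) ^ ellJ J (insert a I) * (-q) ^ (((insert a I).card - 1) / 2) := by
      rw [hcard, hell]
      have hpw : ((-1 : R)) ^ (ellJ J (insert a I) + I.card) = (-1) ^ ellJ J (insert a I) := by
        rw [pow_add, (Nat.even_iff.2 h20).neg_one_pow, mul_one]
      rw [hpw, Nat.add_sub_cancel]
    rw [hcoef, hmon, mul_smul_comm]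
    simp
  · have hc1 : I.card % 2 = 1 := by omega
    have h2' : 2 ∣ (insert a I).card := by rw [hcard]; omega
    rw [if_neg h2, if_pos h2', if_pos h2, if_neg (not_not_intro h2'), if_pos h2]
    have hcoef : ((-1 : R) ^ ellJ J (insert a I) * (-q) ^ ((insert a I).card / 2))
        = q * ((-1 : R) ^ ellJ J I * (-q) ^ ((I.card - 1) / 2)) := by
      rw [hcard, hell]
      have hpow : (-1 : R) ^ (ellJ J (insert a I) + I.card)
          = -(-1 : R) ^ ellJ J (insert a I) := by
        rw [pow_add, (Nat.odd_iff.2 hc1).neg_one_pow, mul_neg_one]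
      have hdiv : (I.card + 1) / 2 = (I.card - 1) / 2 + 1 := by omega
      rw [hpow, hdiv, pow_succ]
      ring
    rw [hcoef, hmon, mul_smul_comm]
    simp only [pow_two, sub_mul, smul_sub, ← Algebra.smul_def, mul_assoc, smul_smul,
      mul_zero, add_zero, zero_add]
    module

theorem stmt9 {S : Type*} [Fintype S] [LinearOrder S] {R : Type*} [CommRing R] (q : R)
    (M : Set (Finset S)) (J : Finset S) (hJ : J.Nonempty)
    (h : tauMinus R q J ∈ Iq R q M) :
    tauPlus R q J ∈ Iq R q M := by
  classical
  have haJ : J.min' hJ ∈ J := J.min'_mem hJ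
  have hmin : ∀ b ∈ J, J.min' hJ ≤ b := fun b hb => J.min'_le b hb
  rw [tau_key q haJ hmin]
  refine TwoSidedIdeal.sub_mem _ (TwoSidedIdeal.mul_mem_left _ _ _ h) ?_
  refine TwoSidedIdeal.finsetSum_mem _ _ _ fun I hI => ?_
  split_ifs with hpar
  all_goals first
    | exact TwoSidedIdeal.zero_mem _
    | · rw [Algebra.smul_def]
        refine TwoSidedIdeal.mul_mem_left _ _ _ ?_
        refine TwoSidedIdeal.mul_mem_right _ _ _ ?_
        refine TwoSidedIdeal.subset_span ?_
        left; left
        exact ⟨J.min' hJ, rfl⟩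
end

section
/- Let 𝔐 ⊆ 2^S be a set system and J ⊆ S nonempty with τ⁻_J ∈ I_q(𝔐), and let s ∈ S. If either r < s for all r ∈ J, or #J ≥ 2 and s < j_2 (the second-smallest element of J), then τ⁻_{J∪{s}} ∈ I_q(𝔐). -/
section aux
variable {S : Type*} [LinearOrder S] {R : Type*} [CommRing R]

variable {S : Type*} [LinearOrder S] {R : Type*} [CommRing R]

lemma sort_insert_max {s : S} {T : Finset S} (h : ∀ t ∈ T, t ≤ s) (hs : s ∉ T) :
    (insert s T).sort (· ≤ ·) = T.sort (· ≤ ·) ++ [s] := by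
  refine (fun hp h1 h2 => List.Perm.eq_of_pairwise' h1 h2 hp) ?_ (Finset.pairwise_sort _ _) ?_
  · refine (Finset.sort_perm_toList (insert s T) (· ≤ ·)).trans
      ((Finset.toList_insert hs).trans ?_)
    refine (List.Perm.cons s (Finset.sort_perm_toList T (· ≤ ·)).symm).trans ?_
    simpa using (List.perm_append_comm (l₁ := [s]) (l₂ := T.sort (· ≤ ·)))
  · rw [List.pairwise_append]
    refine ⟨Finset.pairwise_sort _ _, List.pairwise_singleton _ s, ?_⟩
    intro x hx y hy
    simp only [List.mem_singleton] at hy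
    subst hy
    exact h x ((Finset.mem_sort _).1 hx)

lemma tMon_insert_min {s : S} {T : Finset S} (hs : s ∉ T) (h : ∀ t ∈ T, s < t) :
    tMon R (insert s T) = FreeAlgebra.ι R s * tMon R T := by
  rw [tMon, Finset.sort_insert _ (fun b hb => (h b hb).le) hs, List.map_cons, List.prod_cons, tMon]

lemma tMon_insert_max_s10 {s : S} {T : Finset S} (hs : s ∉ T) (h : ∀ t ∈ T, t < s) :
    tMon R (insert s T) = tMon R T * FreeAlgebra.ι R s := by
  rw [tMon, sort_insert_max (fun b hb => (h b hb).le) hs, List.map_append, List.prod_append, tMon]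
  simp

lemma insert_sdiff_of_subset {s : S} {T I : Finset S} (hs : s ∉ T) (hI : I ⊆ T) :
    (insert s T) \ I = insert s (T \ I) := by
  ext x
  simp only [Finset.mem_sdiff, Finset.mem_insert]
  constructor
  · rintro ⟨h1 | h1, h2⟩
    · exact Or.inl h1
    · exact Or.inr ⟨h1, h2⟩
  · rintro (rfl | ⟨h1, h2⟩)
    · exact ⟨Or.inl rfl, fun hx => hs (hI hx)⟩
    · exact ⟨Or.inr h1, h2⟩

lemma insert_sdiff_insert' {s : S} {T I : Finset S} (hs : s ∉ T) :
    (insert s T) \ (insert s I) = T \ I := by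
  ext x
  simp only [Finset.mem_sdiff, Finset.mem_insert]
  constructor
  · rintro ⟨h1 | h1, h2⟩
    · exact absurd (Or.inl h1) h2
    · exact ⟨h1, fun hx => h2 (Or.inr hx)⟩
  · rintro ⟨h1, h2⟩
    exact ⟨Or.inr h1, by rintro (rfl | hx); exact hs h1; exact h2 hx⟩

lemma ellJ_insert_min {s : S} {T I : Finset S} (hs : s ∉ T) (h : ∀ t ∈ T, s < t) (hI : I ⊆ T) :
    ellJ (insert s T) I = ellJ T I + I.card := by
  rw [ellJ, ellJ]
  have key : ∀ i ∈ I, ((insert s T \ I).filter (· < i)).card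
      = ((T \ I).filter (· < i)).card + 1 := by
    intro i hi
    rw [insert_sdiff_of_subset hs hI, Finset.filter_insert, if_pos (h i (hI hi)),
      Finset.card_insert_of_notMem (fun hx => hs (Finset.mem_sdiff.1 (Finset.mem_of_mem_filter s hx)).1)]
  rw [Finset.sum_congr rfl key, Finset.sum_add_distrib, Finset.sum_const, smul_eq_mul, mul_one]

lemma ellJ_insert_min' {s : S} {T I : Finset S} (hs : s ∉ T) (h : ∀ t ∈ T, s < t) (hI : I ⊆ T) :
    ellJ (insert s T) (insert s I) = ellJ T I := by
  have hsI : s ∉ I := fun hx => hs (hI hx)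
  rw [ellJ, Finset.sum_insert hsI, insert_sdiff_insert' hs]
  have : (T \ I).filter (· < s) = ∅ := by
    refine Finset.filter_eq_empty_iff.2 fun {x} hx => ?_
    exact not_lt.2 (h x (Finset.mem_sdiff.1 hx).1).le
  rw [this]
  simp [ellJ]

lemma ellJ_insert_max {s : S} {T I : Finset S} (hs : s ∉ T) (h : ∀ t ∈ T, t < s) (hI : I ⊆ T) :
    ellJ (insert s T) I = ellJ T I := by
  refine Finset.sum_congr rfl fun i hi => ?_
  rw [insert_sdiff_of_subset hs hI, Finset.filter_insert, if_neg (not_lt.2 (h i (hI hi)).le)]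

lemma ellJ_insert_max' {s : S} {T I : Finset S} (hs : s ∉ T) (h : ∀ t ∈ T, t < s) (hI : I ⊆ T) :
    ellJ (insert s T) (insert s I) = ellJ T I + (T \ I).card := by
  have hsI : s ∉ I := fun hx => hs (hI hx)
  rw [ellJ, Finset.sum_insert hsI, insert_sdiff_insert' hs]
  have : (T \ I).filter (· < s) = T \ I :=
    Finset.filter_true_of_mem fun x hx => h x (Finset.mem_sdiff.1 hx).1
  rw [this, ellJ, add_comm]

lemma neg_one_pow_odd {c : ℕ} (hc : ¬ 2 ∣ c) : (-1 : R) ^ c = -1 :=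
  Odd.neg_one_pow ⟨c / 2, by omega⟩

lemma neg_one_pow_even {c : ℕ} (hc : 2 ∣ c) : (-1 : R) ^ c = 1 :=
  Even.neg_one_pow ⟨c / 2, by omega⟩

lemma tauMinus_insert_min (q : R) {s : S} {T : Finset S} (hs : s ∉ T) (h : ∀ t ∈ T, s < t) :
    tauMinus R q (insert s T) = tauPlus R q T - FreeAlgebra.ι R s * tauMinus R q T := by
  rw [tauMinus, Finset.sum_filter, Finset.sum_powerset_insert hs]
  have h1 : (∑ I ∈ T.powerset, if ¬ 2 ∣ I.card then
      ((-1 : R) ^ ellJ (insert s T) I * (-q) ^ ((I.card - 1) / 2)) • tMon R (insert s T \ I)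
      else 0) = -(FreeAlgebra.ι R s * tauMinus R q T) := by
    rw [tauMinus, Finset.sum_filter, Finset.mul_sum, ← Finset.sum_neg_distrib]
    refine Finset.sum_congr rfl fun I hI => ?_
    rw [Finset.mem_powerset] at hI
    by_cases hc : 2 ∣ I.card
    · rw [if_neg (not_not_intro hc), if_neg (not_not_intro hc), mul_zero, neg_zero]
    · rw [if_pos hc, if_pos hc,
        ellJ_insert_min hs h hI, insert_sdiff_of_subset hs hI,
        tMon_insert_min (fun hx => hs (Finset.mem_sdiff.1 hx).1)
          (fun t ht => h t (Finset.mem_sdiff.1 ht).1),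
        pow_add, neg_one_pow_odd hc, mul_neg_one, mul_smul_comm, neg_mul, neg_smul]
  have h2 : (∑ I ∈ T.powerset, if ¬ 2 ∣ (insert s I).card then
      ((-1 : R) ^ ellJ (insert s T) (insert s I) * (-q) ^ (((insert s I).card - 1) / 2)) •
        tMon R (insert s T \ insert s I) else 0) = tauPlus R q T := by
    rw [tauPlus, Finset.sum_filter]
    refine Finset.sum_congr rfl fun I hI => ?_
    rw [Finset.mem_powerset] at hI
    have hsI : s ∉ I := fun hx => hs (hI hx)
    rw [Finset.card_insert_of_notMem hsI]
    by_cases hc : 2 ∣ I.card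
    · rw [if_pos (by omega), if_pos hc, ellJ_insert_min' hs h hI, insert_sdiff_insert' hs]
      congr 2
    · rw [if_neg (by omega), if_neg hc]
  rw [h1, h2]
  abel

lemma tauPlus_insert_min (q : R) {s : S} {T : Finset S} (hs : s ∉ T) (h : ∀ t ∈ T, s < t) :
    tauPlus R q (insert s T) = FreeAlgebra.ι R s * tauPlus R q T - q • tauMinus R q T := by
  rw [tauPlus, Finset.sum_filter, Finset.sum_powerset_insert hs]
  have h1 : (∑ I ∈ T.powerset, if 2 ∣ I.card then
      ((-1 : R) ^ ellJ (insert s T) I * (-q) ^ (I.card / 2)) • tMon R (insert s T \ I)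
      else 0) = FreeAlgebra.ι R s * tauPlus R q T := by
    rw [tauPlus, Finset.sum_filter, Finset.mul_sum]
    refine Finset.sum_congr rfl fun I hI => ?_
    rw [Finset.mem_powerset] at hI
    by_cases hc : 2 ∣ I.card
    · rw [if_pos hc, if_pos hc, ellJ_insert_min hs h hI, insert_sdiff_of_subset hs hI,
        tMon_insert_min (fun hx => hs (Finset.mem_sdiff.1 hx).1)
          (fun t ht => h t (Finset.mem_sdiff.1 ht).1),
        pow_add, neg_one_pow_even hc, mul_one, mul_smul_comm]
    · simp [hc]
  have h2 : (∑ I ∈ T.powerset, if 2 ∣ (insert s I).card then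
      ((-1 : R) ^ ellJ (insert s T) (insert s I) * (-q) ^ ((insert s I).card / 2)) •
        tMon R (insert s T \ insert s I) else 0) = -(q • tauMinus R q T) := by
    rw [tauMinus, Finset.sum_filter, Finset.smul_sum, ← Finset.sum_neg_distrib]
    refine Finset.sum_congr rfl fun I hI => ?_
    rw [Finset.mem_powerset] at hI
    have hsI : s ∉ I := fun hx => hs (hI hx)
    rw [Finset.card_insert_of_notMem hsI]
    by_cases hc : 2 ∣ I.card
    · rw [if_neg (by omega), if_neg (not_not_intro hc), smul_zero, neg_zero]
    · rw [if_pos (by omega), if_pos hc, ellJ_insert_min' hs h hI,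
        insert_sdiff_insert' hs]
      have h3 : (I.card + 1) / 2 = (I.card - 1) / 2 + 1 := by omega
      rw [h3, pow_succ, smul_smul, ← neg_smul]
      congr 1
      ring
  rw [h1, h2]
  abel

lemma tauMinus_insert_max (q : R) {s : S} {T : Finset S} (hs : s ∉ T) (h : ∀ t ∈ T, t < s) :
    tauMinus R q (insert s T) = tauMinus R q T * FreeAlgebra.ι R s
      + ((-1 : R) ^ T.card) • tauPlus R q T := by
  rw [tauMinus, Finset.sum_filter, Finset.sum_powerset_insert hs]
  have h1 : (∑ I ∈ T.powerset, if ¬ 2 ∣ I.card then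
      ((-1 : R) ^ ellJ (insert s T) I * (-q) ^ ((I.card - 1) / 2)) • tMon R (insert s T \ I)
      else 0) = tauMinus R q T * FreeAlgebra.ι R s := by
    rw [tauMinus, Finset.sum_filter, Finset.sum_mul]
    refine Finset.sum_congr rfl fun I hI => ?_
    rw [Finset.mem_powerset] at hI
    by_cases hc : 2 ∣ I.card
    · rw [if_neg (not_not_intro hc), if_neg (not_not_intro hc), zero_mul]
    · rw [if_pos hc, if_pos hc,
        ellJ_insert_max hs h hI, insert_sdiff_of_subset hs hI,
        tMon_insert_max_s10 (fun hx => hs (Finset.mem_sdiff.1 hx).1)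
          (fun t ht => h t (Finset.mem_sdiff.1 ht).1),
        smul_mul_assoc]
  have h2 : (∑ I ∈ T.powerset, if ¬ 2 ∣ (insert s I).card then
      ((-1 : R) ^ ellJ (insert s T) (insert s I) * (-q) ^ (((insert s I).card - 1) / 2)) •
        tMon R (insert s T \ insert s I) else 0) = ((-1 : R) ^ T.card) • tauPlus R q T := by
    rw [tauPlus, Finset.sum_filter, Finset.smul_sum]
    refine Finset.sum_congr rfl fun I hI => ?_
    rw [Finset.mem_powerset] at hI
    have hsI : s ∉ I := fun hx => hs (hI hx)
    rw [Finset.card_insert_of_notMem hsI]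
    by_cases hc : 2 ∣ I.card
    · rw [if_pos (by omega), if_pos hc, ellJ_insert_max' hs h hI, insert_sdiff_insert' hs,
        smul_smul]
      have hcard : (T \ I).card = T.card - I.card := Finset.card_sdiff_of_subset hI
      have hTI : I.card ≤ T.card := Finset.card_le_card hI
      have hpow : ((-1 : R) ^ (ellJ T I + (T \ I).card)) = (-1 : R) ^ T.card * (-1) ^ ellJ T I := by
        rw [pow_add]
        have : (-1 : R) ^ (T \ I).card = (-1 : R) ^ T.card := by
          rcases hc with ⟨k, hk⟩
          have : T.card = (T \ I).card + 2 * k := by omega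
          rw [this, pow_add, pow_mul]
          simp
        rw [this]
        ring
      have harg : (I.card + 1 - 1) / 2 = I.card / 2 := by omega
      rw [harg, hpow]
      congr 1
      ring
    · rw [if_neg (by omega), if_neg hc, smul_zero]
  rw [h1, h2]

end aux

section ideal
variable {S : Type*} [LinearOrder S] {R : Type*} [CommRing R] (q : R) (M : Set (Finset S))

lemma sq_gen_mem (j : S) :
    FreeAlgebra.ι R j ^ 2 - algebraMap R _ q ∈ Iq R q M :=
  TwoSidedIdeal.subset_span (Or.inl (Or.inl ⟨j, rfl⟩))

lemma comm_gen_mem {r s : S} (h : s < r) :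
    FreeAlgebra.ι R r * FreeAlgebra.ι R s + FreeAlgebra.ι R s * FreeAlgebra.ι R r
      - 2 * algebraMap R _ q ∈ Iq R q M :=
  TwoSidedIdeal.subset_span (Or.inl (Or.inr ⟨r, s, h, rfl⟩))

lemma tauPlus_mem {J : Finset S} (hJ : J.Nonempty) (h : tauMinus R q J ∈ Iq R q M) :
    tauPlus R q J ∈ Iq R q M := by
  set j1 := J.min' hJ with hj1def
  set J' := J.erase j1 with hJ'def
  have hins : insert j1 J' = J := Finset.insert_erase (J.min'_mem hJ)
  have hj1 : j1 ∉ J' := Finset.notMem_erase _ _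
  have hlt : ∀ t ∈ J', j1 < t := fun t ht => Finset.min'_lt_of_mem_erase_min' J hJ ht
  have e1 : tauPlus R q J = FreeAlgebra.ι R j1 * tauPlus R q J' - q • tauMinus R q J' := by
    rw [← hins]; exact tauPlus_insert_min q hj1 hlt
  have e2 : tauMinus R q J = tauPlus R q J' - FreeAlgebra.ι R j1 * tauMinus R q J' := by
    rw [← hins]; exact tauMinus_insert_min q hj1 hlt
  have key : tauPlus R q J = FreeAlgebra.ι R j1 * tauMinus R q J
      + (FreeAlgebra.ι R j1 ^ 2 - algebraMap R _ q) * tauMinus R q J' := by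
    rw [e1, e2, Algebra.smul_def]
    noncomm_ring
  rw [key]
  exact TwoSidedIdeal.add_mem _ (TwoSidedIdeal.mul_mem_left _ _ _ h)
    (TwoSidedIdeal.mul_mem_right _ _ _ (sq_gen_mem q M j1))

end ideal

theorem stmt10 {S : Type*} [Fintype S] [LinearOrder S] {R : Type*} [CommRing R] (q : R)
    (M : Set (Finset S)) (J : Finset S) (hJ : J.Nonempty)
    (h : tauMinus R q J ∈ Iq R q M) (s : S)
    (hcase : (∀ r ∈ J, r < s) ∨
      (2 ≤ J.card ∧ ∀ j ∈ J.erase (J.min' hJ), s < j)) :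
    tauMinus R q (insert s J) ∈ Iq R q M := by
  by_cases hsJ : s ∈ J
  · rw [Finset.insert_eq_self.2 hsJ]; exact h
  rcases hcase with h1 | ⟨hcard, h2⟩
  · rw [tauMinus_insert_max q hsJ h1]
    refine TwoSidedIdeal.add_mem _ (TwoSidedIdeal.mul_mem_right _ _ _ h) ?_
    rw [Algebra.smul_def]
    exact TwoSidedIdeal.mul_mem_left _ _ _ (tauPlus_mem q M hJ h)
  · set j1 := J.min' hJ with hj1def
    rcases lt_trichotomy s j1 with hlt | heq | hgt
    · have hall : ∀ t ∈ J, s < t := by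
        intro t ht
        rcases eq_or_ne t j1 with rfl | hne
        · exact hlt
        · exact h2 t (Finset.mem_erase.2 ⟨hne, ht⟩)
      rw [tauMinus_insert_min q hsJ hall]
      exact TwoSidedIdeal.sub_mem _ (tauPlus_mem q M hJ h)
        (TwoSidedIdeal.mul_mem_left _ _ _ h)
    · exact absurd (heq ▸ J.min'_mem hJ) hsJ
    · set J' := J.erase j1 with hJ'def
      have hins : insert j1 J' = J := Finset.insert_erase (J.min'_mem hJ)
      have hj1 : j1 ∉ J' := Finset.notMem_erase _ _
      have hj1lt : ∀ t ∈ J', j1 < t := fun t ht => Finset.min'_lt_of_mem_erase_min' J hJ ht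
      have hsJ' : s ∉ J' := fun hx => hsJ (Finset.erase_subset _ _ hx)
      have hslt : ∀ t ∈ J', s < t := h2
      have hK : insert s J = insert j1 (insert s J') := by
        rw [← hins, Finset.insert_comm]
      have hj1ins : j1 ∉ insert s J' := by
        simp only [Finset.mem_insert]
        rintro (rfl | hx)
        · exact lt_irrefl _ hgt
        · exact hj1 hx
      have hj1insLt : ∀ t ∈ insert s J', j1 < t := by
        intro t ht
        rcases Finset.mem_insert.1 ht with rfl | hx
        · exact hgt
        · exact hj1lt t hx
      have eJ : tauMinus R q J = tauPlus R q J' - FreeAlgebra.ι R j1 * tauMinus R q J' := by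
        rw [← hins]; exact tauMinus_insert_min q hj1 hj1lt
      have ePlus : tauPlus R q J' = tauMinus R q J + FreeAlgebra.ι R j1 * tauMinus R q J' := by
        rw [eJ]; abel
      have key : tauMinus R q (insert s J)
          = (FreeAlgebra.ι R s - FreeAlgebra.ι R j1) * tauMinus R q J
            + (FreeAlgebra.ι R s * FreeAlgebra.ι R j1 + FreeAlgebra.ι R j1 * FreeAlgebra.ι R s
              - FreeAlgebra.ι R j1 ^ 2 - algebraMap R _ q) * tauMinus R q J' := by
        rw [hK, tauMinus_insert_min q hj1ins hj1insLt, tauPlus_insert_min q hsJ' hslt,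
          tauMinus_insert_min q hsJ' hslt, ePlus, Algebra.smul_def]
        noncomm_ring
      have hbracket : FreeAlgebra.ι R s * FreeAlgebra.ι R j1 + FreeAlgebra.ι R j1 * FreeAlgebra.ι R s
              - FreeAlgebra.ι R j1 ^ 2 - algebraMap R _ q
          = (FreeAlgebra.ι R s * FreeAlgebra.ι R j1 + FreeAlgebra.ι R j1 * FreeAlgebra.ι R s
              - 2 * algebraMap R _ q) - (FreeAlgebra.ι R j1 ^ 2 - algebraMap R _ q) := by
        noncomm_ring
      rw [key, hbracket]
      exact TwoSidedIdeal.add_mem _ (TwoSidedIdeal.mul_mem_left _ _ _ h)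
        (TwoSidedIdeal.mul_mem_right _ _ _
          (TwoSidedIdeal.sub_mem _ (comm_gen_mem q M hgt) (sq_gen_mem q M j1)))
end

section
/- Let M be a matroid on ground set S and let J, K ⊆ S be dependent sets such that J ∩ K is independent. Then for every l ∈ J ∪ K, the set (J ∪ K) ∖ {l} is dependent. -/
theorem stmt11 {S : Type*} (M : Matroid S) (hE : M.E = Set.univ)
    (J K : Set S) (hJ : M.Dep J) (hK : M.Dep K) (hJK : M.Indep (J ∩ K)) :
    ∀ l ∈ J ∪ K, M.Dep ((J ∪ K) \ {l}) := by
  intro l hl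
  have hG : ∀ X : Set S, X ⊆ M.E := fun X => by rw [hE]; exact Set.subset_univ X
  by_contra hdep
  have hI : M.Indep ((J ∪ K) \ {l}) := (Matroid.not_dep_iff (hG _)).mp hdep
  have hlJ : l ∈ J := by
    by_contra hlJ
    exact hJ.not_indep (hI.subset fun x hx => ⟨Or.inl hx, fun h => hlJ (h ▸ hx)⟩)
  have hlK : l ∈ K := by
    by_contra hlK
    exact hK.not_indep (hI.subset fun x hx => ⟨Or.inr hx, fun h => hlK (h ▸ hx)⟩)
  -- a basis B of J ∪ K containing J ∩ K
  obtain ⟨B, hB, hJKB⟩ := hJK.subset_isBasis_of_subset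
    (Set.inter_subset_left.trans Set.subset_union_left) (hG _)
  -- (J ∪ K) \ {l} is itself a basis of J ∪ K
  obtain ⟨B', hB', hIB'⟩ := hI.subset_isBasis_of_subset (Set.diff_subset) (hG _)
  have hB'eq : B' = (J ∪ K) \ {l} := by
    apply subset_antisymm _ hIB'
    intro x hx
    refine ⟨hB'.subset hx, fun hxl => ?_⟩
    -- if l ∈ B' then J ∪ K ⊆ B', so J ∪ K indep, contradicting J dep
    subst hxl
    have : J ∪ K ⊆ B' := fun y hy => by
      by_cases hyl : y = x
      · exact hyl ▸ hx
      · exact hIB' ⟨hy, hyl⟩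
    exact hJ.not_indep ((hB'.indep.subset this).subset Set.subset_union_left)
  rw [hB'eq] at hB'
  -- pick x ∈ J \ B
  obtain ⟨x, hxJ, hxB⟩ : ∃ x, x ∈ J ∧ x ∉ B := by
    by_contra h
    push_neg at h
    exact hJ.not_indep (hB.indep.subset h)
  have hxK : x ∉ K := fun hxK => hxB (hJKB ⟨hxJ, hxK⟩)
  have hxl : x ≠ l := fun h => hxK (h ▸ hlK)
  -- exchange: x ∈ B' \ B
  obtain ⟨f, hf, hBas⟩ := hB'.exchange hB ⟨⟨Or.inl hxJ, hxl⟩, hxB⟩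
  -- f ∈ B \ B' = B \ ((J∪K)\{l}) ⊆ {l}
  have hfl : f = l := by
    have hfJK : f ∈ J ∪ K := hB.subset hf.1
    by_contra hfl
    exact hf.2 ⟨hfJK, hfl⟩
  rw [hfl] at hBas
  -- then insert l (((J∪K)\{l}) \ {x}) = (J ∪ K) \ {x}, which is independent but ⊇ K
  have heq : insert l (((J ∪ K) \ {l}) \ {x}) = (J ∪ K) \ {x} := by
    ext y
    constructor
    · rintro (rfl | ⟨⟨hy, _⟩, hyx⟩)
      · exact ⟨hl, Ne.symm hxl⟩
      · exact ⟨hy, hyx⟩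
    · rintro ⟨hy, hyx⟩
      by_cases hyl : y = l
      · exact Or.inl hyl
      · exact Or.inr ⟨⟨hy, hyl⟩, hyx⟩
  rw [heq] at hBas
  exact hK.not_indep (hBas.indep.subset fun y hy => ⟨Or.inr hy, fun h => hxK (h ▸ hy)⟩)
end
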